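/- arXiv:math/9412203 — 8 statements merged into one kernel-verified Lean document; each statement's English description precedes it below -/
import Mathlib

section
/- Let H be a subgroup of F, let T be a Schreier transversal for H, and let w ∈ H with w ≠ 1. Let u be the longest element of T that is a prefix of the reduced word of w, and let v be the longest element of T that is a prefix of the reduced word of w⁻¹. Then l(u) + l(v) < l(w). -/
open FreeGroup

/-- A Schreier transversal for a subgroup `H` of the free group on `Fin n`:
a set of representatives, exactly one for each right coset `Hg`, closed under
taking initial segments (prefixes) of reduced words. -/
def IsSchreierTransversal {n : ℕ} (H : Subgroup (FreeGroup (Fin n)))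
    (T : Set (FreeGroup (Fin n))) : Prop :=
  (∀ g : FreeGroup (Fin n), ∃! t, t ∈ T ∧ g * t⁻¹ ∈ H) ∧
  (∀ t ∈ T, ∀ k : ℕ, FreeGroup.mk ((FreeGroup.toWord t).take k) ∈ T)

lemma invRev_append' {α : Type*} (l₁ l₂ : List (α × Bool)) :
    FreeGroup.invRev (l₁ ++ l₂) = FreeGroup.invRev l₂ ++ FreeGroup.invRev l₁ := by
  simp [FreeGroup.invRev]

/-- If `u` is the longest element of `T` which is a prefix of the reduced word of
`w ∈ H \ {1}` and `v` is the longest element of `T` which is a prefix of the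
reduced word of `w⁻¹`, then `l(u) + l(v) < l(w)`. -/
theorem prefix_length_lt {n : ℕ} (hn : 1 ≤ n) (H : Subgroup (FreeGroup (Fin n)))
    (T : Set (FreeGroup (Fin n))) (hT : IsSchreierTransversal H T)
    (w : FreeGroup (Fin n)) (hwH : w ∈ H) (hw1 : w ≠ 1)
    (u v : FreeGroup (Fin n))
    (huT : u ∈ T) (hupre : u.toWord <+: w.toWord)
    (humax : ∀ u' ∈ T, u'.toWord <+: w.toWord → FreeGroup.norm u' ≤ FreeGroup.norm u)
    (hvT : v ∈ T) (hvpre : v.toWord <+: w⁻¹.toWord)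
    (hvmax : ∀ v' ∈ T, v'.toWord <+: w⁻¹.toWord → FreeGroup.norm v' ≤ FreeGroup.norm v) :
    FreeGroup.norm u + FreeGroup.norm v < FreeGroup.norm w := by
  by_contra hcon
  push_neg at hcon
  set L := w.toWord.length with hL
  set a := u.toWord.length with ha
  set b := v.toWord.length with hb
  have hnorm : FreeGroup.norm w = L := rfl
  have hnormu : FreeGroup.norm u = a := rfl
  have hnormv : FreeGroup.norm v = b := rfl
  rw [hnorm, hnormu, hnormv] at hcon
  set k := L - b with hk
  have hbL : b ≤ L := by
    have := hvpre.length_le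
    simpa [FreeGroup.toWord_inv, FreeGroup.invRev_length] using this
  have hka : k ≤ a := by omega
  -- u.toWord = w.toWord.take a
  have hu_take : u.toWord = w.toWord.take a := by
    obtain ⟨s, hs⟩ := hupre
    rw [← hs, ha, List.take_left]
  -- p is the prefix of length k
  set p : FreeGroup (Fin n) := FreeGroup.mk (u.toWord.take k) with hp
  have hpT : p ∈ T := hT.2 u huT k
  have htake_eq : u.toWord.take k = w.toWord.take k := by
    rw [hu_take, List.take_take, min_eq_left hka]
  -- identify the suffix with invRev v.toWord
  have hdrop : w.toWord.drop k = FreeGroup.invRev v.toWord := by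
    have hsplit : w⁻¹.toWord =
        FreeGroup.invRev (w.toWord.drop k) ++ FreeGroup.invRev (w.toWord.take k) := by
      rw [FreeGroup.toWord_inv, ← invRev_append', List.take_append_drop]
    have hlen : (FreeGroup.invRev (w.toWord.drop k)).length = b := by
      rw [FreeGroup.invRev_length, List.length_drop]
      omega
    obtain ⟨s, hs⟩ := hvpre
    rw [hsplit] at hs
    have : v.toWord = FreeGroup.invRev (w.toWord.drop k) := by
      have h1 : v.toWord = (FreeGroup.invRev (w.toWord.drop k) ++
          FreeGroup.invRev (w.toWord.take k)).take b := by
        rw [← hs, hb, List.take_left]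
      rw [h1, List.take_append_of_le_length (le_of_eq hlen.symm), ← hlen,
        List.take_length]
    rw [this, FreeGroup.invRev_invRev]
  -- w = p * v⁻¹
  have hw_eq : w = p * v⁻¹ := by
    have : w = FreeGroup.mk (w.toWord.take k) * FreeGroup.mk (w.toWord.drop k) := by
      rw [FreeGroup.mul_mk, List.take_append_drop, FreeGroup.mk_toWord]
    rw [this, hp, htake_eq, hdrop, ← FreeGroup.inv_mk, FreeGroup.mk_toWord]
  -- uniqueness of coset representatives forces p = v
  obtain ⟨t, _, htu⟩ := hT.1 p
  have h1 : p = t := htu p ⟨hpT, by simp [mul_inv_cancel, Subgroup.one_mem]⟩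
  have h2 : v = t := htu v ⟨hvT, by rw [← hw_eq]; exact hwH⟩
  have : p = v := h1.trans h2.symm
  rw [this, mul_inv_cancel] at hw_eq
  exact hw1 hw_eq
end

section
/- Let H be a subgroup of F and let T be a Schreier transversal for H with coset map φ. Then rank(H) equals the cardinality of the set {(t, x) ∈ T × X : t·x ≠ φ(t·x)}, i.e. the cardinality of the set of nontrivial Schreier generators t·x·φ(t·x)⁻¹. -/
open FreeGroup

/-- `B` is a free basis of the subgroup `H`: `B ⊆ H` and the induced homomorphism
from the free group on `B` to `H` is an isomorphism. -/
def IsFreeBasis {G : Type*} [Group G] (H : Subgroup G) (B : Set G) : Prop :=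
  ∃ hB : ∀ b ∈ B, b ∈ H,
    Function.Bijective (FreeGroup.lift (fun b : B => (⟨(b : G), hB b b.2⟩ : H)))

namespace SchreierProof

variable {n : ℕ} {H : Subgroup (FreeGroup (Fin n))} {T : Set (FreeGroup (Fin n))}
  {φ : FreeGroup (Fin n) → FreeGroup (Fin n)}

section Lemmas

variable (hT : IsSchreierTransversal H T)
  (hφ : ∀ g : FreeGroup (Fin n), φ g ∈ T ∧ g * (φ g)⁻¹ ∈ H)

include hT hφ

lemma phi_eq {g t : FreeGroup (Fin n)} (ht : t ∈ T) (hgt : g * t⁻¹ ∈ H) : φ g = t := by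
  obtain ⟨u, -, hu⟩ := hT.1 g
  exact (hu _ ⟨(hφ g).1, (hφ g).2⟩).trans (hu _ ⟨ht, hgt⟩).symm

lemma phi_fix {t : FreeGroup (Fin n)} (ht : t ∈ T) : φ t = t :=
  phi_eq hT hφ ht (by simp [one_mem])

lemma phi_phi_mul (u v : FreeGroup (Fin n)) : φ (φ u * v) = φ (u * v) := by
  refine phi_eq hT hφ (hφ (u * v)).1 ?_
  have h1 : φ u * u⁻¹ ∈ H := by
    have := inv_mem (hφ u).2
    simpa [mul_inv_rev] using this
  have h2 : u * v * (φ (u * v))⁻¹ ∈ H := (hφ _).2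
  have : φ u * v * (φ (u * v))⁻¹ = (φ u * u⁻¹) * (u * v * (φ (u * v))⁻¹) := by group
  rw [this]; exact mul_mem h1 h2

lemma one_mem_T : (1 : FreeGroup (Fin n)) ∈ T := by
  have := hT.2 (φ 1) (hφ 1).1 0
  simpa [← FreeGroup.one_eq_mk] using this

lemma phi_H {h : FreeGroup (Fin n)} (hh : h ∈ H) : φ h = 1 :=
  phi_eq hT hφ (one_mem_T hT hφ) (by simpa using hh)

end Lemmas

variable (T) in
/-- The free group on all pairs. -/
abbrev KK : Type := FreeGroup (↥T × Fin n)

variable (T φ) in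
/-- The index type of nontrivial Schreier generators. -/
abbrev SType : Type := {p : FreeGroup (Fin n) × Fin n //
    p.1 ∈ T ∧ p.1 * FreeGroup.of p.2 ≠ φ (p.1 * FreeGroup.of p.2)}

def aperm (hT : IsSchreierTransversal H T)
    (hφ : ∀ g : FreeGroup (Fin n), φ g ∈ T ∧ g * (φ g)⁻¹ ∈ H) (x : Fin n) :
    Equiv.Perm ↥T where
  toFun t := ⟨φ (↑t * (FreeGroup.of x)⁻¹), (hφ _).1⟩
  invFun t := ⟨φ (↑t * FreeGroup.of x), (hφ _).1⟩
  left_inv t := Subtype.ext <| by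
    simp only [phi_phi_mul hT hφ, inv_mul_cancel_right, phi_fix hT hφ t.2]
  right_inv t := Subtype.ext <| by
    simp only [phi_phi_mul hT hφ, mul_inv_cancel_right, phi_fix hT hφ t.2]

variable (T) in
def rho : Equiv.Perm ↥T →* MulAut (↥T → KK T) where
  toFun α := MulEquiv.arrowCongr α (MulEquiv.refl _)
  map_one' := rfl
  map_mul' α β := rfl

variable (hT : IsSchreierTransversal H T)
  (hφ : ∀ g : FreeGroup (Fin n), φ g ∈ T ∧ g * (φ g)⁻¹ ∈ H)

def theta : FreeGroup (Fin n) →* (↥T → KK T) ⋊[rho T] Equiv.Perm ↥T :=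
  FreeGroup.lift fun x => ⟨fun t => FreeGroup.of (t, x), aperm hT hφ x⟩

def AA (g : FreeGroup (Fin n)) (t : ↥T) : ↥T := (theta hT hφ g).right t

def BB (g : FreeGroup (Fin n)) (t : ↥T) : KK T :=
  (theta hT hφ g).left (AA hT hφ g t)

lemma pure_eq (x : Fin n) : (pure x : FreeGroup (Fin n)) = FreeGroup.of x := rfl

lemma theta_right_of (x : Fin n) : (theta hT hφ (FreeGroup.of x)).right = aperm hT hφ x := by
  simp [theta]

lemma AA_of (x : Fin n) (t : ↥T) :
    AA hT hφ (FreeGroup.of x) t = ⟨φ (↑t * (FreeGroup.of x)⁻¹), (hφ _).1⟩ := by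
  simp [AA, theta_right_of, aperm]

lemma AA_of_inv (x : Fin n) (t : ↥T) :
    AA hT hφ (FreeGroup.of x)⁻¹ t = ⟨φ (↑t * FreeGroup.of x), (hφ _).1⟩ := by
  have : (theta hT hφ (FreeGroup.of x)⁻¹).right = (aperm hT hφ x)⁻¹ := by
    rw [MonoidHom.map_inv]
    simp [theta_right_of]
  rw [AA, this]
  rfl

lemma AA_mul (g h : FreeGroup (Fin n)) (t : ↥T) :
    AA hT hφ (g * h) t = AA hT hφ g (AA hT hφ h t) := by
  simp [AA, map_mul, SemidirectProduct.mul_right, Equiv.Perm.mul_apply]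

lemma AA_eq (g : FreeGroup (Fin n)) (t : ↥T) :
    (AA hT hφ g t : FreeGroup (Fin n)) = φ (↑t * g⁻¹) := by
  induction g using FreeGroup.induction_on generalizing t with
  | C1 =>
      have h1 : (theta hT hφ 1).right = 1 := by rw [MonoidHom.map_one]; exact SemidirectProduct.one_right
      simp [AA, h1, phi_fix hT hφ t.2]
  | of x => rw [AA_of]
  | inv_of x _ => rw [AA_of_inv, inv_inv]
  | mul g h ihg ihh =>
      rw [AA_mul, ihg, ihh, phi_phi_mul hT hφ, mul_inv_rev, mul_assoc]

lemma BB_one (t : ↥T) : BB hT hφ 1 t = 1 := by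
  simp [BB, map_one, SemidirectProduct.one_left]

lemma BB_mul (g h : FreeGroup (Fin n)) (t : ↥T) :
    BB hT hφ (g * h) t = BB hT hφ g (AA hT hφ h t) * BB hT hφ h t := by
  rw [BB, AA, _root_.map_mul, SemidirectProduct.mul_left, SemidirectProduct.mul_right]
  simp [BB, AA, _root_.map_mul, SemidirectProduct.mul_left, SemidirectProduct.mul_right,
    rho, MulEquiv.arrowCongr, Equiv.Perm.mul_apply, Equiv.symm_apply_apply]

lemma BB_of (x : Fin n) (t : ↥T) :
    BB hT hφ (FreeGroup.of x) t = FreeGroup.of (aperm hT hφ x t, x) := by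
  simp [BB, AA, theta]

lemma BB_inv (g : FreeGroup (Fin n)) (t : ↥T) :
    BB hT hφ g⁻¹ t = (BB hT hφ g (AA hT hφ g⁻¹ t))⁻¹ := by
  have h1 : BB hT hφ (g * g⁻¹) t = 1 := by rw [mul_inv_cancel]; exact BB_one hT hφ t
  rw [BB_mul] at h1
  exact (inv_eq_of_mul_eq_one_right h1).symm

lemma of_inv_eq_mk (x : Fin n) :
    (FreeGroup.of x)⁻¹ = FreeGroup.mk [(x, false)] := by
  show (FreeGroup.mk [(x, true)])⁻¹ = _
  rw [FreeGroup.inv_mk]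
  simp [FreeGroup.invRev]

def pmap : KK T →* FreeGroup (SType T φ) :=
  FreeGroup.lift fun p =>
    if h : (p.1 : FreeGroup (Fin n)) * FreeGroup.of p.2 ≠
        φ ((p.1 : FreeGroup (Fin n)) * FreeGroup.of p.2)
    then FreeGroup.of (⟨((p.1 : FreeGroup (Fin n)), p.2), p.1.2, h⟩ : SType T φ)
    else 1

lemma pmap_triv {t : ↥T} {x : Fin n}
    (h : (t : FreeGroup (Fin n)) * FreeGroup.of x = φ ((t : FreeGroup (Fin n)) * FreeGroup.of x)) :
    pmap (φ := φ) (FreeGroup.of (t, x)) = 1 := by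
  rw [pmap, FreeGroup.lift_apply_of, dif_neg]
  simpa using h

lemma BB_self (t : ↥T) : pmap (φ := φ) (BB hT hφ (↑t) t) = 1 := by
  obtain ⟨u, hu⟩ := t
  have main : ∀ k (t' : ↥T), (t' : FreeGroup (Fin n)) = FreeGroup.mk ((toWord u).take k) →
      pmap (φ := φ) (BB hT hφ (↑t') t') = 1 := by
    intro k
    induction k with
    | zero =>
        intro t' ht'
        have h1 : (t' : FreeGroup (Fin n)) = 1 := by
          simpa [← FreeGroup.one_eq_mk] using ht'
        rw [h1, BB_one, _root_.map_one]
    | succ k ih =>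
        intro t' ht'
        by_cases hk : k < (toWord u).length
        · set l := toWord u with hl
          set u' : ↥T := ⟨FreeGroup.mk (l.take k), hT.2 u hu k⟩ with hu'
          set x : Fin n := (l.get ⟨k, hk⟩).1 with hx
          have htake : l.take (k + 1) = l.take k ++ [l.get ⟨k, hk⟩] := by
            rw [List.take_succ]
            simp [List.getElem?_eq_getElem hk]
          have hsplit : (t' : FreeGroup (Fin n)) =
              ↑u' * FreeGroup.mk [l.get ⟨k, hk⟩] := by
            rw [ht', htake, ← FreeGroup.mul_mk]
          rcases hb : (l.get ⟨k, hk⟩).2 with _ | _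
          · -- letter is (x, false), i.e. (of x)⁻¹
            have hy : FreeGroup.mk [l.get ⟨k, hk⟩] = (FreeGroup.of x)⁻¹ := by
              rw [of_inv_eq_mk, hx]
              congr 1
              rw [← hb]
            have hsplit' : (t' : FreeGroup (Fin n)) = ↑u' * (FreeGroup.of x)⁻¹ := by
              rw [hsplit, hy]
            have hAA : (AA hT hφ (FreeGroup.of x)⁻¹ t' : FreeGroup (Fin n)) =
                FreeGroup.mk (l.take k) := by
              rw [AA_of_inv]
              show φ (↑t' * FreeGroup.of x) = _
              rw [hsplit', inv_mul_cancel_right, phi_fix hT hφ u'.2]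
            rw [hsplit', BB_mul, _root_.map_mul]
            have h1 : (↑u' : FreeGroup (Fin n)) = ↑(AA hT hφ (FreeGroup.of x)⁻¹ t') :=
              hAA.symm
            rw [h1, ih _ hAA, one_mul, BB_inv, _root_.map_inv]
            have haperm : ((aperm hT hφ x (AA hT hφ (FreeGroup.of x)⁻¹ t')) :
                FreeGroup (Fin n)) = ↑t' := by
              show φ (↑(AA hT hφ (FreeGroup.of x)⁻¹ t') * (FreeGroup.of x)⁻¹) = ↑t'
              rw [hAA]
              have : FreeGroup.mk (l.take k) * (FreeGroup.of x)⁻¹ = ↑t' := by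
                rw [hsplit']
              rw [this, phi_fix hT hφ t'.2]
            rw [BB_of]
            have h2 : (↑t' * FreeGroup.of x : FreeGroup (Fin n)) = ↑u' := by
              rw [hsplit', inv_mul_cancel_right]
            have htriv : (↑((aperm hT hφ x) (AA hT hφ (FreeGroup.of x)⁻¹ t')) :
                FreeGroup (Fin n)) * FreeGroup.of x =
                φ (↑((aperm hT hφ x) (AA hT hφ (FreeGroup.of x)⁻¹ t')) * FreeGroup.of x) := by
              rw [haperm, h2]
              exact (phi_fix hT hφ u'.2).symm
            rw [pmap_triv htriv, inv_one]
          · -- letter is (x, true), i.e. of x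
            have hy : FreeGroup.mk [l.get ⟨k, hk⟩] = FreeGroup.of x := by
              show _ = FreeGroup.mk [(x, true)]
              rw [hx]
              congr 1
              rw [← hb]
            have hsplit' : (t' : FreeGroup (Fin n)) = ↑u' * FreeGroup.of x := by
              rw [hsplit, hy]
            have hAA : (AA hT hφ (FreeGroup.of x) t' : FreeGroup (Fin n)) =
                FreeGroup.mk (l.take k) := by
              rw [AA_of]
              show φ (↑t' * (FreeGroup.of x)⁻¹) = _
              rw [hsplit', mul_inv_cancel_right, phi_fix hT hφ u'.2]
            rw [hsplit', BB_mul, _root_.map_mul]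
            have h1 : (↑u' : FreeGroup (Fin n)) = ↑(AA hT hφ (FreeGroup.of x) t') :=
              hAA.symm
            rw [h1, ih _ hAA, one_mul, BB_of]
            apply pmap_triv
            have haperm : ((aperm hT hφ x t') : FreeGroup (Fin n)) =
                FreeGroup.mk (l.take k) := by
              show φ (↑t' * (FreeGroup.of x)⁻¹) = _
              rw [hsplit', mul_inv_cancel_right, phi_fix hT hφ u'.2]
            have h2 : FreeGroup.mk (l.take k) * FreeGroup.of x = ↑t' := hsplit'.symm
            rw [haperm, h2]
            exact (phi_fix hT hφ t'.2).symm
        · push_neg at hk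
          apply ih t'
          rw [ht']
          congr 1
          rw [List.take_of_length_le hk, List.take_of_length_le (hk.trans (Nat.le_succ k))]
  exact main (toWord u).length ⟨u, hu⟩ (by rw [List.take_length, FreeGroup.mk_toWord])

lemma AA_one_of_mem {h : FreeGroup (Fin n)} (hh : h ∈ H) (ht : (1 : FreeGroup (Fin n)) ∈ T) :
    AA hT hφ h ⟨1, ht⟩ = ⟨1, ht⟩ := by
  apply Subtype.ext
  rw [AA_eq]
  show φ (1 * h⁻¹) = 1
  rw [one_mul]
  exact phi_H hT hφ (inv_mem hh)

/-- The retraction `H →* FreeGroup (SType T φ)`. -/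
def RH : H →* FreeGroup (SType T φ) where
  toFun h := pmap (φ := φ) (BB hT hφ (↑h) ⟨1, one_mem_T hT hφ⟩)
  map_one' := by simp only [OneMemClass.coe_one, BB_one, _root_.map_one]
  map_mul' h₁ h₂ := by
    show pmap (BB hT hφ (↑h₁ * ↑h₂) _) = _
    rw [BB_mul, _root_.map_mul, AA_one_of_mem hT hφ h₂.2]

/-- The Schreier generator map into `H`. -/
def LL' : FreeGroup (SType T φ) →* H :=
  FreeGroup.lift fun s =>
    ⟨s.1.1 * FreeGroup.of s.1.2 * (φ (s.1.1 * FreeGroup.of s.1.2))⁻¹, (hφ _).2⟩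

lemma RH_gen (s : SType T φ) : RH hT hφ (LL' hφ (FreeGroup.of s)) = FreeGroup.of s := by
  rw [LL', FreeGroup.lift_apply_of]
  show pmap (BB hT hφ (s.1.1 * FreeGroup.of s.1.2 * (φ (s.1.1 * FreeGroup.of s.1.2))⁻¹)
    ⟨1, one_mem_T hT hφ⟩) = _
  set t : FreeGroup (Fin n) := s.1.1 with hts
  set x : Fin n := s.1.2 with hxs
  set w : FreeGroup (Fin n) := φ (t * FreeGroup.of x) with hw
  have hwT : w ∈ T := (hφ _).1
  have htT : t ∈ T := s.2.1
  have hassoc : t * FreeGroup.of x * w⁻¹ = t * (FreeGroup.of x * w⁻¹) := by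
    rw [mul_assoc]
  have hA1 : (AA hT hφ w⁻¹ ⟨1, one_mem_T hT hφ⟩ : FreeGroup (Fin n)) = w := by
    rw [AA_eq]
    show φ (1 * w⁻¹⁻¹) = w
    rw [one_mul, inv_inv, phi_fix hT hφ hwT]
  have hAx : (AA hT hφ (FreeGroup.of x) (AA hT hφ w⁻¹ ⟨1, one_mem_T hT hφ⟩) :
      FreeGroup (Fin n)) = t := by
    rw [AA_of]
    show φ (↑(AA hT hφ w⁻¹ ⟨1, one_mem_T hT hφ⟩) * (FreeGroup.of x)⁻¹) = t
    rw [hA1, hw, phi_phi_mul hT hφ, mul_inv_cancel_right, phi_fix hT hφ htT]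
  rw [hassoc, BB_mul, _root_.map_mul, AA_mul]
  -- first factor : BB t (elt with value t)
  have e1 : pmap (φ := φ) (BB hT hφ t (AA hT hφ (FreeGroup.of x)
      (AA hT hφ w⁻¹ ⟨1, one_mem_T hT hφ⟩))) = 1 := by
    rw [show t = ↑(AA hT hφ (FreeGroup.of x) (AA hT hφ w⁻¹ ⟨1, one_mem_T hT hφ⟩))
      from hAx.symm]
    exact BB_self hT hφ _
  rw [e1, one_mul, BB_mul, _root_.map_mul]
  -- last factor : BB w⁻¹ at 1
  have e3 : pmap (φ := φ) (BB hT hφ w⁻¹ ⟨1, one_mem_T hT hφ⟩) = 1 := by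
    rw [BB_inv, _root_.map_inv]
    have h4 := BB_self hT hφ (AA hT hφ w⁻¹ ⟨1, one_mem_T hT hφ⟩)
    rw [hA1] at h4
    rw [h4, inv_one]
  rw [e3, mul_one, BB_of]
  have haperm : ((aperm hT hφ x (AA hT hφ w⁻¹ ⟨1, one_mem_T hT hφ⟩)) :
      FreeGroup (Fin n)) = t := by
    show φ (↑(AA hT hφ w⁻¹ ⟨1, one_mem_T hT hφ⟩) * (FreeGroup.of x)⁻¹) = t
    rw [hA1, hw, phi_phi_mul hT hφ, mul_inv_cancel_right, phi_fix hT hφ htT]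
  rw [pmap, FreeGroup.lift_apply_of, dif_pos (by rw [haperm]; exact s.2.2)]
  congr 1
  apply Subtype.ext
  show (_, x) = s.1
  rw [haperm]

include hT hφ in
lemma closure_gens :
    Subgroup.closure (Set.range fun s : SType T φ =>
      s.1.1 * FreeGroup.of s.1.2 * (φ (s.1.1 * FreeGroup.of s.1.2))⁻¹) = H := by
  set R := Set.range fun s : SType T φ =>
      s.1.1 * FreeGroup.of s.1.2 * (φ (s.1.1 * FreeGroup.of s.1.2))⁻¹ with hR
  apply le_antisymm
  · rw [Subgroup.closure_le]
    rintro _ ⟨s, rfl⟩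
    exact (hφ _).2
  · intro h hh
    have hpure : ∀ (x : Fin n), ∀ t ∈ T,
        t * FreeGroup.of x * (φ (t * FreeGroup.of x))⁻¹ ∈ Subgroup.closure R := by
      intro x t ht
      by_cases hx : t * FreeGroup.of x ≠ φ (t * FreeGroup.of x)
      · exact Subgroup.subset_closure ⟨⟨(t, x), ht, hx⟩, rfl⟩
      · push_neg at hx
        rw [← hx, mul_inv_cancel]
        exact one_mem _
    have key : ∀ g : FreeGroup (Fin n), ∀ t ∈ T,
        t * g * (φ (t * g))⁻¹ ∈ Subgroup.closure R := by
      intro g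
      induction g using FreeGroup.induction_on with
      | C1 =>
          intro t ht
          rw [mul_one, phi_fix hT hφ ht, mul_inv_cancel]
          exact one_mem _
      | of x =>
          intro t ht
          exact hpure x t ht
      | inv_of x _ =>
          intro t ht
          have ht₁ : φ (t * (FreeGroup.of x)⁻¹) ∈ T := (hφ _).1
          have h1 : φ (φ (t * (FreeGroup.of x)⁻¹) * FreeGroup.of x) = t := by
            rw [phi_phi_mul hT hφ, inv_mul_cancel_right, phi_fix hT hφ ht]
          have h2 := inv_mem (hpure x _ ht₁)
          rw [h1] at h2
          convert h2 using 1
          group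
      | mul g₁ g₂ ih₁ ih₂ =>
          intro t ht
          have hX : φ (φ (t * g₁) * g₂) = φ (t * (g₁ * g₂)) := by
            rw [phi_phi_mul hT hφ, mul_assoc]
          have h2 := ih₂ (φ (t * g₁)) (hφ _).1
          rw [hX] at h2
          have h3 := mul_mem (ih₁ t ht) h2
          convert h3 using 1
          group
    have := key h 1 (one_mem_T hT hφ)
    rwa [one_mul, phi_H hT hφ hh, inv_one, mul_one] at this

include hT in
lemma LL'_bijective : Function.Bijective (LL' hφ) := by
  constructor
  · intro a b hab
    have h1 := congrArg (RH hT hφ) hab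
    have h2 : ∀ w, RH hT hφ (LL' hφ w) = w := by
      intro w
      have : (RH hT hφ).comp (LL' hφ) = MonoidHom.id _ :=
        FreeGroup.ext_hom _ _ fun s => by
          simpa using RH_gen hT hφ s
      calc RH hT hφ (LL' hφ w) = ((RH hT hφ).comp (LL' hφ)) w := rfl
        _ = w := by rw [this]; rfl
    rwa [h2, h2] at h1
  · intro h
    have hsub : H.subtype.comp (LL' hφ) = FreeGroup.lift fun s : SType T φ =>
        s.1.1 * FreeGroup.of s.1.2 * (φ (s.1.1 * FreeGroup.of s.1.2))⁻¹ :=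
      FreeGroup.ext_hom _ _ fun s => by simp [LL']
    have hmem : (↑h : FreeGroup (Fin n)) ∈ (FreeGroup.lift fun s : SType T φ =>
        s.1.1 * FreeGroup.of s.1.2 * (φ (s.1.1 * FreeGroup.of s.1.2))⁻¹).range := by
      rw [FreeGroup.range_lift_eq_closure, closure_gens hT hφ]
      exact h.2
    obtain ⟨w, hw⟩ := hmem
    refine ⟨w, Subtype.ext ?_⟩
    have : (↑(LL' hφ w) : FreeGroup (Fin n)) = (H.subtype.comp (LL' hφ)) w := rfl
    rw [this, hsub, hw]

end SchreierProof

open Cardinal in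
/-- The rank of `H` equals the cardinality of the set of pairs `(t, x) ∈ T × X`
with `t·x ≠ φ(t·x)`, i.e. of the set of nontrivial Schreier generators. -/
theorem rank_eq_card_schreier_generators {n : ℕ} (hn : 1 ≤ n)
    (H : Subgroup (FreeGroup (Fin n))) (T : Set (FreeGroup (Fin n)))
    (hT : IsSchreierTransversal H T)
    (φ : FreeGroup (Fin n) → FreeGroup (Fin n))
    (hφ : ∀ g : FreeGroup (Fin n), φ g ∈ T ∧ g * (φ g)⁻¹ ∈ H)
    (B : Set (FreeGroup (Fin n))) (hB : IsFreeBasis H B) :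
    Cardinal.mk B = Cardinal.mk {p : FreeGroup (Fin n) × Fin n //
      p.1 ∈ T ∧ p.1 * FreeGroup.of p.2 ≠ φ (p.1 * FreeGroup.of p.2)} := by
  obtain ⟨hBmem, hbij⟩ := hB
  have e : FreeGroup ↑B ≃* FreeGroup (SchreierProof.SType T φ) :=
    (MulEquiv.ofBijective _ hbij).trans
      (MulEquiv.ofBijective _ (SchreierProof.LL'_bijective hT hφ)).symm
  have e2 : (↑B →₀ ℤ) ≃+ (SchreierProof.SType T φ →₀ ℤ) :=
    ((FreeAbelianGroup.equivFinsupp ↑B).symm.trans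
      e.abelianizationCongr.toAdditive).trans
        (FreeAbelianGroup.equivFinsupp (SchreierProof.SType T φ))
  have h3 := e2.toIntLinearEquiv.rank_eq
  rwa [rank_finsupp_self', rank_finsupp_self'] at h3
end

section
/- Let H be a subgroup of F and T a Schreier transversal for H. The sequence r_T(i) = 1 + (n−1)·Γ_T(i) − γ_T(i+1)/2 is eventually constant if and only if H is finitely generated. -/
open FreeGroup


/-- `Γ_T(i)`, the number of elements of the transversal `T` of length at most `i`. -/
noncomputable def GammaT {n : ℕ} (T : Set (FreeGroup (Fin n))) (i : ℕ) : ℕ :=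
  Set.ncard {t ∈ T | FreeGroup.norm t ≤ i}

/-- `γ_T(i)`, the number of elements of the transversal `T` of length exactly `i`. -/
noncomputable def gammaT {n : ℕ} (T : Set (FreeGroup (Fin n))) (i : ℕ) : ℕ :=
  Set.ncard {t ∈ T | FreeGroup.norm t = i}

/-- `r_T(i) = 1 + (n−1)·Γ_T(i) − γ_T(i+1)/2`. -/
noncomputable def rT (n : ℕ) (T : Set (FreeGroup (Fin n))) (i : ℕ) : ℚ :=
  1 + ((n : ℚ) - 1) * (GammaT T i : ℚ) - (gammaT T (i + 1) : ℚ) / 2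

namespace SchreierAux

section Words
variable {α : Type*} [DecidableEq α]

/-- no-cancellation relation between adjacent letters -/
def NC (a b : α × Bool) : Prop := ¬(a.1 = b.1 ∧ a.2 = !b.2)

theorem reduce_eq_self_of_chain' {L : List (α × Bool)} (h : List.Chain' NC L) :
    reduce L = L := by
  induction L with
  | nil => rfl
  | cons a L ih =>
    have hL : List.Chain' NC L := h.tail
    rw [reduce.cons, ih hL]
    cases L with
    | nil => rfl
    | cons b t =>
      have hnc : NC a b := (List.isChain_cons_cons.1 h).1
      simp only [NC] at hnc
      simp [hnc]

theorem chain'_of_reduce_eq_self {L : List (α × Bool)} (h : reduce L = L) :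
    List.Chain' NC L := by
  induction L with
  | nil => exact List.isChain_nil
  | cons a L ih =>
    rw [reduce.cons] at h
    rcases hL : reduce L with _ | ⟨b, t⟩
    · rw [hL] at h
      simp at h
      subst h
      exact List.isChain_singleton _
    · rw [hL] at h
      by_cases hc : a.1 = b.1 ∧ a.2 = !b.2
      · simp only [if_pos hc] at h
        exfalso
        have h1 : (reduce L).length ≤ L.length := (reduce.red (L := L)).length_le
        rw [hL] at h1
        have h2 : t.length = (a :: L).length := congrArg List.length h
        simp at h1 h2
        omega
      · simp only [if_neg hc] at h
        have hLbt : L = b :: t := by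
          have := congrArg List.tail h
          simpa using this.symm
        rw [hLbt]
        refine List.isChain_cons_cons.2 ⟨hc, ?_⟩
        rw [← hLbt]
        exact ih (by rw [hL, hLbt])

theorem reduce_eq_self_iff_chain' {L : List (α × Bool)} :
    reduce L = L ↔ List.Chain' NC L :=
  ⟨chain'_of_reduce_eq_self, reduce_eq_self_of_chain'⟩

theorem chain'_toWord (g : FreeGroup α) : List.Chain' NC g.toWord :=
  chain'_of_reduce_eq_self (reduce_toWord g)

/-- the single letter as a group element -/
def ltr (y : α × Bool) : FreeGroup α := FreeGroup.mk [y]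

@[simp] theorem toWord_ltr (y : α × Bool) : (ltr y).toWord = [y] := by
  simp [ltr, toWord_mk, reduce_singleton]

theorem mul_ltr_eq_mk (g : FreeGroup α) (y : α × Bool) :
    g * ltr y = mk (g.toWord ++ [y]) := by
  conv_lhs => rw [← mk_toWord (x := g)]
  rw [ltr, mul_mk]

/-- multiplying by a single letter: either appends or deletes the last letter -/
theorem toWord_mul_ltr (g : FreeGroup α) (y : α × Bool) :
    (g * ltr y).toWord = g.toWord ++ [y] ∨
      (∃ A, g.toWord = A ++ [(y.1, !y.2)] ∧ (g * ltr y).toWord = A) := by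
  rcases hA : g.toWord.getLast? with _ | z
  · left
    have : g.toWord = [] := by simpa using hA
    rw [mul_ltr_eq_mk, this]
    simp [toWord_mk, reduce_singleton]
  · have hz : ∃ A, g.toWord = A ++ [z] := by
      rcases List.eq_nil_or_concat g.toWord with h | ⟨A, z', h⟩
      · rw [h] at hA; simp at hA
      · refine ⟨A, ?_⟩
        rw [h] at hA ⊢
        simp at hA
        rw [hA]
        simp
    obtain ⟨A, hAz⟩ := hz
    by_cases hc : z = (y.1, !y.2)
    · right
      refine ⟨A, by rw [hAz, hc], ?_⟩
      rw [mul_ltr_eq_mk, toWord_mk, hAz, hc]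
      have : A ++ [(y.1, !y.2)] ++ [y] = A ++ (y.1, !y.2) :: (y.1, !(!y.2)) :: [] := by
        simp
      rw [this]
      have hstep : Red.Step (A ++ (y.1, !y.2) :: (y.1, !(!y.2)) :: []) (A ++ []) :=
        Red.Step.not
      rw [reduce.Step.eq hstep, List.append_nil]
      apply reduce_eq_self_of_chain'
      exact (chain'_toWord g).prefix ⟨[z], by rw [hAz]⟩
    · left
      rw [mul_ltr_eq_mk, toWord_mk]
      apply reduce_eq_self_of_chain'
      refine (chain'_toWord g).append (by simp) ?_
      intro a ha b hb
      have hbz : b = y := by simpa using hb.symm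
      have haz : a = z := by
        rw [hAz] at ha
        simpa using ha.symm
      subst haz hbz
      intro ⟨h1, h2⟩
      exact hc (by ext <;> simp [h1, h2])

theorem norm_mul_ltr (g : FreeGroup α) (y : α × Bool) :
    norm (g * ltr y) = norm g + 1 ∨ norm g = norm (g * ltr y) + 1 := by
  rcases toWord_mul_ltr g y with h | ⟨A, h1, h2⟩
  · left; simp [FreeGroup.norm, h]
  · right; simp [FreeGroup.norm, h1, h2]


theorem norm_eq_length (g : FreeGroup α) : FreeGroup.norm g = g.toWord.length := rfl

theorem mul_ltr_of_concat {g : FreeGroup α} {A : List (α × Bool)} {y : α × Bool}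
    (h : g.toWord = A ++ [(y.1, !y.2)]) : (g * ltr y).toWord = A := by
  rw [mul_ltr_eq_mk, toWord_mk, h]
  have h2 : A ++ [(y.1, !y.2)] ++ [y] = A ++ ((y.1, !y.2) :: (y.1, !(!y.2)) :: []) := by
    simp
  rw [h2, reduce.Step.eq Red.Step.not, List.append_nil]
  exact reduce_eq_self_of_chain' ((chain'_toWord g).prefix ⟨[(y.1, !y.2)], by rw [h]⟩)

theorem toWord_of_norm_lt {g : FreeGroup α} {y : α × Bool}
    (h : FreeGroup.norm (g * ltr y) < FreeGroup.norm g) :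
    ∃ A, g.toWord = A ++ [(y.1, !y.2)] ∧ (g * ltr y).toWord = A := by
  rcases toWord_mul_ltr g y with h1 | ⟨A, h1, h2⟩
  · exfalso
    rw [norm_eq_length, norm_eq_length, h1] at h
    simp at h
  · exact ⟨A, h1, h2⟩

theorem toWord_of_norm_gt {g : FreeGroup α} {y : α × Bool}
    (h : FreeGroup.norm g < FreeGroup.norm (g * ltr y)) :
    (g * ltr y).toWord = g.toWord ++ [y] := by
  rcases toWord_mul_ltr g y with h1 | ⟨A, h1, h2⟩
  · exact h1
  · exfalso
    rw [norm_eq_length, norm_eq_length, h1, h2] at h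
    simp at h

theorem mk_dropLast_mul {u : FreeGroup α} {A : List (α × Bool)} {z : α × Bool}
    (h : u.toWord = A ++ [z]) : mk A * ltr z = u := by
  conv_rhs => rw [← mk_toWord (x := u)]
  rw [h, ltr, mul_mk]

theorem toWord_mk_prefix {u : FreeGroup α} {A B : List (α × Bool)}
    (h : u.toWord = A ++ B) : (mk A).toWord = A := by
  rw [toWord_mk]
  exact reduce_eq_self_of_chain' ((chain'_toWord u).prefix ⟨B, by rw [h]⟩)

end Words


section Transversal

variable {n : ℕ} (H : Subgroup (FreeGroup (Fin n))) (T : Set (FreeGroup (Fin n)))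

/-- the coset representative function -/
noncomputable def phi (g : FreeGroup (Fin n)) : FreeGroup (Fin n) :=
  letI := Classical.dec (∃! t, t ∈ T ∧ g * t⁻¹ ∈ H)
  if h : ∃! t, t ∈ T ∧ g * t⁻¹ ∈ H then h.choose else 1

variable {H T}

theorem phi_mem (hT : IsSchreierTransversal H T) (g : FreeGroup (Fin n)) :
    phi H T g ∈ T := by
  rw [phi, dif_pos (hT.1 g)]
  exact (hT.1 g).choose_spec.1.1

theorem mul_phi_inv_mem (hT : IsSchreierTransversal H T) (g : FreeGroup (Fin n)) :
    g * (phi H T g)⁻¹ ∈ H := by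
  rw [phi, dif_pos (hT.1 g)]
  exact (hT.1 g).choose_spec.1.2

theorem phi_eq (hT : IsSchreierTransversal H T) {g t : FreeGroup (Fin n)}
    (ht : t ∈ T) (h : g * t⁻¹ ∈ H) : phi H T g = t := by
  rw [phi, dif_pos (hT.1 g)]
  exact ((hT.1 g).choose_spec.2 t ⟨ht, h⟩).symm

theorem phi_fix (hT : IsSchreierTransversal H T) {t : FreeGroup (Fin n)}
    (ht : t ∈ T) : phi H T t = t :=
  phi_eq hT ht (by rw [mul_inv_cancel]; exact H.one_mem)

theorem one_mem_T (hT : IsSchreierTransversal H T) : (1 : FreeGroup (Fin n)) ∈ T := by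
  obtain ⟨t, ⟨ht, -⟩, -⟩ := hT.1 1
  have := hT.2 t ht 0
  simpa [FreeGroup.one_eq_mk] using this

theorem phi_one (hT : IsSchreierTransversal H T) : phi H T 1 = 1 :=
  phi_fix hT (one_mem_T hT)

theorem phi_coset (hT : IsSchreierTransversal H T) {g₁ g₂ : FreeGroup (Fin n)}
    (h : g₁ * g₂⁻¹ ∈ H) : phi H T g₁ = phi H T g₂ := by
  apply phi_eq hT (phi_mem hT g₂)
  have h2 := mul_phi_inv_mem hT g₂
  have : g₁ * (phi H T g₂)⁻¹ = (g₁ * g₂⁻¹) * (g₂ * (phi H T g₂)⁻¹) := by group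
  rw [this]
  exact H.mul_mem h h2

theorem phi_mul_left (hT : IsSchreierTransversal H T) {h : FreeGroup (Fin n)}
    (hh : h ∈ H) (g : FreeGroup (Fin n)) : phi H T (h * g) = phi H T g := by
  apply phi_coset hT
  have : h * g * g⁻¹ = h := by group
  rw [this]; exact hh

theorem prefix_mem_T (hT : IsSchreierTransversal H T) {t : FreeGroup (Fin n)}
    (ht : t ∈ T) {A B : List (Fin n × Bool)} (hAB : t.toWord = A ++ B) :
    mk A ∈ T := by
  have := hT.2 t ht A.length
  rwa [hAB, List.take_left] at this

theorem phi_spec_eq (hT : IsSchreierTransversal H T) {g t : FreeGroup (Fin n)}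
    (ht : t ∈ T) (hgt : phi H T g = t) : g * t⁻¹ ∈ H := hgt ▸ mul_phi_inv_mem hT g

/-- The set of "non-tree edges" of the Schreier graph. -/
def NTE (H : Subgroup (FreeGroup (Fin n))) (T : Set (FreeGroup (Fin n))) :
    Set (FreeGroup (Fin n) × (Fin n × Bool)) :=
  {p | p.1 ∈ T ∧ p.1 * ltr p.2 ∉ T}

end Transversal

section Counting

variable {n : ℕ} {H : Subgroup (FreeGroup (Fin n))} {T : Set (FreeGroup (Fin n))}

theorem ball_finite (i : ℕ) : {g : FreeGroup (Fin n) | FreeGroup.norm g ≤ i}.Finite := by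
  apply Set.Finite.of_finite_image (f := FreeGroup.toWord) _ toWord_injective.injOn
  apply (List.finite_length_le (Fin n × Bool) i).subset
  rintro w ⟨g, hg, rfl⟩
  exact hg

theorem TB_finite (T : Set (FreeGroup (Fin n))) (i : ℕ) :
    {t ∈ T | FreeGroup.norm t ≤ i}.Finite :=
  (ball_finite i).subset fun t ht => ht.2

theorem Tsph_finite (T : Set (FreeGroup (Fin n))) (i : ℕ) :
    {t ∈ T | FreeGroup.norm t = i}.Finite :=
  (ball_finite i).subset fun t ht => le_of_eq ht.2

/-- the non-tree edges with source of norm at most `i` -/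
def NTEle (H : Subgroup (FreeGroup (Fin n))) (T : Set (FreeGroup (Fin n))) (i : ℕ) :
    Set (FreeGroup (Fin n) × (Fin n × Bool)) :=
  {p ∈ NTE H T | FreeGroup.norm p.1 ≤ i}

theorem NTEle_finite (H : Subgroup (FreeGroup (Fin n))) (T : Set (FreeGroup (Fin n)))
    (i : ℕ) : (NTEle H T i).Finite := by
  have : NTEle H T i ⊆ {t ∈ T | FreeGroup.norm t ≤ i} ×ˢ (Set.univ : Set (Fin n × Bool)) := by
    rintro ⟨t, y⟩ ⟨⟨h1, _⟩, h3⟩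
    exact ⟨⟨h1, h3⟩, trivial⟩
  exact ((TB_finite T i).prod (Set.finite_univ)).subset this


theorem ncard_prod_univ (B : Set (FreeGroup (Fin n))) :
    (B ×ˢ (Set.univ : Set (Fin n × Bool))).ncard = B.ncard * (2 * n) := by
  rw [← Nat.card_coe_set_eq, ← Nat.card_coe_set_eq]
  rw [Nat.card_congr (Equiv.Set.prod _ _), Nat.card_prod]
  congr 1
  rw [Nat.card_congr (Equiv.Set.univ _), Nat.card_eq_fintype_card]
  simp [Fintype.card_prod]
  ring

theorem key_identity (hT : IsSchreierTransversal H T) (i : ℕ) :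
    GammaT T i * (2 * n) + 2 =
      2 * GammaT T i + gammaT T (i + 1) + (NTEle H T i).ncard := by
  classical
  set B : Set (FreeGroup (Fin n)) := {t ∈ T | FreeGroup.norm t ≤ i} with hBdef
  have hBfin : B.Finite := TB_finite T i
  have h1B : (1 : FreeGroup (Fin n)) ∈ B :=
    ⟨one_mem_T hT, by simp [FreeGroup.norm_one]⟩
  set Ppar : Set (FreeGroup (Fin n) × (Fin n × Bool)) :=
    {p | p.1 ∈ B ∧ p.1 * ltr p.2 ∈ T ∧
      FreeGroup.norm (p.1 * ltr p.2) < FreeGroup.norm p.1} with hPpardef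
  set Pch : Set (FreeGroup (Fin n) × (Fin n × Bool)) :=
    {p | p.1 ∈ B ∧ p.1 * ltr p.2 ∈ T ∧
      FreeGroup.norm p.1 < FreeGroup.norm (p.1 * ltr p.2)} with hPchdef
  have hPparfin : Ppar.Finite :=
    ((hBfin.prod Set.finite_univ).subset (fun p hp => ⟨hp.1, trivial⟩))
  have hPchfin : Pch.Finite :=
    ((hBfin.prod Set.finite_univ).subset (fun p hp => ⟨hp.1, trivial⟩))
  have hNTfin : (NTEle H T i).Finite := NTEle_finite H T i
  -- the three sets partition B ×ˢ univ
  have hunion : B ×ˢ (Set.univ : Set (Fin n × Bool)) = (Ppar ∪ Pch) ∪ NTEle H T i := by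
    ext ⟨t, y⟩
    simp only [Set.mem_prod, Set.mem_univ, and_true, Set.mem_union]
    constructor
    · intro ht
      by_cases hty : t * ltr y ∈ T
      · rcases norm_mul_ltr t y with h | h
        · refine Or.inl (Or.inr ⟨ht, hty, ?_⟩)
          show FreeGroup.norm t < FreeGroup.norm (t * ltr y)
          omega
        · refine Or.inl (Or.inl ⟨ht, hty, ?_⟩)
          show FreeGroup.norm (t * ltr y) < FreeGroup.norm t
          omega
      · exact Or.inr ⟨⟨ht.1, hty⟩, ht.2⟩
    · rintro ((h | h) | h)
      · exact h.1
      · exact h.1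
      · exact ⟨h.1.1, h.2⟩
  have hd1 : Disjoint Ppar Pch := by
    rw [Set.disjoint_left]
    rintro ⟨t, y⟩ h1 h2
    have ha : FreeGroup.norm (t * ltr y) < FreeGroup.norm t := h1.2.2
    have hb : FreeGroup.norm t < FreeGroup.norm (t * ltr y) := h2.2.2
    omega
  have hd2 : Disjoint (Ppar ∪ Pch) (NTEle H T i) := by
    rw [Set.disjoint_left]
    rintro ⟨t, y⟩ h1 h2
    rcases h1 with h1 | h1
    · exact h2.1.2 h1.2.1
    · exact h2.1.2 h1.2.1
  -- cardinality of the union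
  have hcard : (B ×ˢ (Set.univ : Set (Fin n × Bool))).ncard =
      Ppar.ncard + Pch.ncard + (NTEle H T i).ncard := by
    rw [hunion, Set.ncard_union_eq hd2 (hPparfin.union hPchfin) hNTfin,
      Set.ncard_union_eq hd1 hPparfin hPchfin]
  -- parent count
  have hpar : Ppar.ncard + 1 = B.ncard := by
    have himg : Prod.fst '' Ppar = B \ {1} := by
      ext t
      constructor
      · rintro ⟨⟨t', y⟩, ⟨h1, h2, h3⟩, rfl⟩
        refine ⟨h1, ?_⟩
        intro h0
        rw [Set.mem_singleton_iff] at h0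
        subst h0
        have h5 : FreeGroup.norm ((1 : FreeGroup (Fin n)) * ltr y) < FreeGroup.norm (1 : FreeGroup (Fin n)) := h3
        have h6 : FreeGroup.norm (1 : FreeGroup (Fin n)) = 0 := FreeGroup.norm_one
        omega
      · rintro ⟨hB, hne⟩
        have hne1 : t ≠ 1 := hne
        have hw : t.toWord ≠ [] := fun h => hne1 (toWord_eq_nil_iff.1 h)
        rcases List.eq_nil_or_concat t.toWord with h | ⟨A, z, h⟩
        · exact absurd h hw
        · rw [List.concat_eq_append] at h
          set y : Fin n × Bool := (z.1, !z.2) with hy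
          have hz : z = (y.1, !y.2) := by
            rw [hy]
            simp
          have hword : (t * ltr y).toWord = A := mul_ltr_of_concat (by rw [h, hz])
          have hmem : t * ltr y ∈ T := by
            have := prefix_mem_T hT hB.1 h
            rwa [← mk_toWord (x := t * ltr y), hword]
          have hnorm : FreeGroup.norm (t * ltr y) < FreeGroup.norm t := by
            rw [norm_eq_length, norm_eq_length, hword, h]
            simp
          exact Set.mem_image_of_mem Prod.fst (show (t, y) ∈ Ppar from ⟨hB, hmem, hnorm⟩)
    have hinj : Set.InjOn Prod.fst Ppar := by
      rintro ⟨t1, y1⟩ h1 ⟨t2, y2⟩ h2 h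
      simp only at h
      subst h
      obtain ⟨A1, hA1, -⟩ := toWord_of_norm_lt h1.2.2
      obtain ⟨A2, hA2, -⟩ := toWord_of_norm_lt h2.2.2
      have hlast : ((y1.1, !y1.2) : Fin n × Bool) = (y2.1, !y2.2) := by
        have e1 : t1.toWord.getLast? = some (y1.1, !y1.2) := by
          rw [hA1]; exact List.getLast?_concat
        have e2 : t1.toWord.getLast? = some (y2.1, !y2.2) := by
          rw [hA2]; exact List.getLast?_concat
        rw [e1] at e2
        exact Option.some_injective _ e2
      have hy12 : y1 = y2 := by
        obtain ⟨h1', h2'⟩ := Prod.mk.inj hlast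
        have h2'' : y1.2 = y2.2 := Bool.not_inj h2'
        exact Prod.ext h1' h2''
      rw [hy12]
    rw [← Set.ncard_image_of_injOn hinj, himg,
      Set.ncard_diff_singleton_of_mem h1B]
    have hBpos : 0 < B.ncard := (Set.ncard_pos hBfin).2 ⟨1, h1B⟩
    omega
  -- child count
  have hch : Pch.ncard + 1 = B.ncard + gammaT T (i + 1) := by
    set C : Set (FreeGroup (Fin n)) := {u ∈ T | u ≠ 1 ∧ FreeGroup.norm u ≤ i + 1} with hCdef
    have hCfin : C.Finite := (ball_finite (i+1)).subset fun u hu => hu.2.2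
    have himg : (fun p : FreeGroup (Fin n) × (Fin n × Bool) => p.1 * ltr p.2) '' Pch = C := by
      ext u
      constructor
      · rintro ⟨⟨t, y⟩, ⟨h1, h2, h3⟩, rfl⟩
        show t * ltr y ∈ C
        have h3' : FreeGroup.norm t < FreeGroup.norm (t * ltr y) := h3
        have hw : (t * ltr y).toWord = t.toWord ++ [y] := toWord_of_norm_gt h3'
        refine ⟨h2, ?_, ?_⟩
        · intro h0
          have h4 : (t * ltr y).toWord = [] := by rw [h0]; exact toWord_one
          rw [hw] at h4; simp at h4
        · have hnt : FreeGroup.norm (t * ltr y) = FreeGroup.norm t + 1 := by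
            rw [norm_eq_length, norm_eq_length, hw]; simp
          have h5 : FreeGroup.norm t ≤ i := h1.2
          omega
      · rintro ⟨huT, hne, hle⟩
        have hw : u.toWord ≠ [] := fun h => hne (toWord_eq_nil_iff.1 h)
        rcases List.eq_nil_or_concat u.toWord with h | ⟨A, z, h⟩
        · exact absurd h hw
        · rw [List.concat_eq_append] at h
          have htA : (mk A : FreeGroup (Fin n)).toWord = A := toWord_mk_prefix h
          have hmemA : (mk A : FreeGroup (Fin n)) ∈ T := prefix_mem_T hT huT h
          have hmul : (mk A : FreeGroup (Fin n)) * ltr z = u := mk_dropLast_mul h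
          have hnA : FreeGroup.norm (mk A : FreeGroup (Fin n)) = A.length := by
            rw [norm_eq_length, htA]
          have hnu : FreeGroup.norm u = A.length + 1 := by
            rw [norm_eq_length, h]; simp
          refine ⟨((mk A : FreeGroup (Fin n)), z), ?_, hmul⟩
          refine ⟨⟨hmemA, ?_⟩, ?_, ?_⟩
          · show FreeGroup.norm (mk A : FreeGroup (Fin n)) ≤ i
            omega
          · show (mk A : FreeGroup (Fin n)) * ltr z ∈ T
            rw [hmul]; exact huT
          · show FreeGroup.norm (mk A : FreeGroup (Fin n)) <
              FreeGroup.norm ((mk A : FreeGroup (Fin n)) * ltr z)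
            rw [hmul]; omega
    have hinj : Set.InjOn (fun p : FreeGroup (Fin n) × (Fin n × Bool) => p.1 * ltr p.2) Pch := by
      rintro ⟨t1, y1⟩ h1 ⟨t2, y2⟩ h2 h
      simp only at h
      have hw1 : (t1 * ltr y1).toWord = t1.toWord ++ [y1] := toWord_of_norm_gt h1.2.2
      have hw2 : (t2 * ltr y2).toWord = t2.toWord ++ [y2] := toWord_of_norm_gt h2.2.2
      have he : t1.toWord ++ [y1] = t2.toWord ++ [y2] := by
        rw [← hw1, ← hw2, h]
      have hy : y1 = y2 := by
        have e1 := List.getLast?_concat (l := t1.toWord) (a := y1)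
        have e2 := List.getLast?_concat (l := t2.toWord) (a := y2)
        rw [← he] at e2
        rw [e1] at e2
        exact Option.some_injective _ e2
      have ht : t1 = t2 := by
        apply toWord_injective
        have := congrArg List.dropLast he
        simpa using this
      rw [ht, hy]
    have hCcard : C.ncard + 1 = B.ncard + gammaT T (i + 1) := by
      have hsplit : C = (B \ {1}) ∪ {u ∈ T | FreeGroup.norm u = i + 1} := by
        ext u
        constructor
        · rintro ⟨huT, hne, hle⟩
          by_cases hni : FreeGroup.norm u ≤ i
          · exact Or.inl ⟨⟨huT, hni⟩, hne⟩
          · exact Or.inr ⟨huT, by omega⟩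
        · rintro (⟨⟨huT, hni⟩, hne⟩ | ⟨huT, hni⟩)
          · exact ⟨huT, hne, by omega⟩
          · refine ⟨huT, ?_, by omega⟩
            intro h0
            rw [h0] at hni
            rw [show FreeGroup.norm (1 : FreeGroup (Fin n)) = 0 from FreeGroup.norm_one] at hni
            omega
      have hdisj : Disjoint (B \ {1}) {u ∈ T | FreeGroup.norm u = i + 1} := by
        rw [Set.disjoint_left]
        rintro u ⟨⟨-, hni⟩, -⟩ ⟨-, hni'⟩
        omega
      rw [hsplit, Set.ncard_union_eq hdisj hBfin.diff (Tsph_finite T (i+1)),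
        Set.ncard_diff_singleton_of_mem h1B]
      have hBpos : 0 < B.ncard := (Set.ncard_pos hBfin).2 ⟨1, h1B⟩
      have : gammaT T (i + 1) = {u ∈ T | FreeGroup.norm u = i + 1}.ncard := rfl
      omega
    rw [← Set.ncard_image_of_injOn hinj, himg]
    exact hCcard
  -- assemble
  have hprod : (B ×ˢ (Set.univ : Set (Fin n × Bool))).ncard = B.ncard * (2 * n) :=
    ncard_prod_univ B
  have hG : B.ncard = GammaT T i := rfl
  rw [hprod] at hcard
  rw [hG] at hcard hpar hch
  omega


end Counting



section Edges

variable {n : ℕ} (H : Subgroup (FreeGroup (Fin n))) (T : Set (FreeGroup (Fin n)))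

/-- The list of (state, letter) transitions when reading the word `u` starting
from the coset of `g`. -/
noncomputable def used : FreeGroup (Fin n) → List (Fin n × Bool) →
    List (FreeGroup (Fin n) × (Fin n × Bool))
  | _, [] => []
  | g, y :: u => (phi H T g, y) :: used (g * ltr y) u

variable {H T}

theorem used_append (g : FreeGroup (Fin n)) (u v : List (Fin n × Bool)) :
    used H T g (u ++ v) = used H T g u ++ used H T (g * mk u) v := by
  induction u generalizing g with
  | nil =>
    have : mk ([] : List (Fin n × Bool)) = 1 := rfl
    simp [used, this]
  | cons y u ih =>
    have hmk : (mk (y :: u) : FreeGroup (Fin n)) = ltr y * mk u := by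
      rw [ltr, mul_mk]
      rfl
    simp only [List.cons_append, used]
    rw [ih (g * ltr y), hmk, mul_assoc]

theorem used_coset (hT : IsSchreierTransversal H T) (u : List (Fin n × Bool))
    {g₁ g₂ : FreeGroup (Fin n)} (h : g₁ * g₂⁻¹ ∈ H) :
    used H T g₁ u = used H T g₂ u := by
  induction u generalizing g₁ g₂ with
  | nil => rfl
  | cons y u ih =>
    simp only [used]
    refine congrArg₂ _ ?_ ?_
    · rw [phi_coset hT h]
    · apply ih
      have : g₁ * ltr y * (g₂ * ltr y)⁻¹ = g₁ * g₂⁻¹ := by group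
      rw [this]
      exact h

theorem ltr_mul_ltr_not (x : Fin n) (b : Bool) :
    ltr (x, b) * ltr (x, !b) = 1 := by
  rw [ltr, ltr, mul_mk]
  have h : Red.Step ([] ++ (x, b) :: (x, !b) :: ([] : List (Fin n × Bool))) ([] ++ []) :=
    Red.Step.not
  simp only [List.nil_append] at h
  have := Quot.sound h
  rw [quot_mk_eq_mk, quot_mk_eq_mk] at this
  exact this

theorem used_step_subset {u v : List (Fin n × Bool)} (h : Red.Step u v)
    (g : FreeGroup (Fin n)) : ∀ e ∈ used H T g v, e ∈ used H T g u := by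
  induction h with
  | @not L₁ L₂ x b =>
    intro e he
    rw [used_append] at he
    rw [used_append]
    rcases List.mem_append.1 he with h1 | h1
    · exact List.mem_append.2 (Or.inl h1)
    · refine List.mem_append.2 (Or.inr ?_)
      simp only [used]
      refine List.mem_cons_of_mem _ (List.mem_cons_of_mem _ ?_)
      have hst : g * mk L₁ * ltr (x, b) * ltr (x, !b) = g * mk L₁ := by
        rw [mul_assoc (g * mk L₁), ltr_mul_ltr_not, mul_one]
      rw [hst]
      exact h1

theorem used_red_subset {u v : List (Fin n × Bool)} (h : Red u v)
    (g : FreeGroup (Fin n)) : ∀ e ∈ used H T g v, e ∈ used H T g u := by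
  induction h with
  | refl => exact fun e he => he
  | tail _ hstep ih => exact fun e he => ih e (used_step_subset hstep g e he)

theorem mk_join_map_toWord (l : List (FreeGroup (Fin n))) :
    mk ((l.map FreeGroup.toWord).flatten) = l.prod := by
  induction l with
  | nil => rfl
  | cons a l ih =>
    simp only [List.map_cons, List.flatten_cons, List.prod_cons, ← mul_mk, mk_toWord, ih]

theorem used_prod_subset (hT : IsSchreierTransversal H T) (l : List (FreeGroup (Fin n)))
    (hl : ∀ a ∈ l, a ∈ H) :
    ∀ e ∈ used H T 1 ((l.map FreeGroup.toWord).flatten),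
      ∃ a ∈ l, e ∈ used H T 1 a.toWord := by
  induction l with
  | nil => intro e he; simp [used] at he
  | cons a l ih =>
    intro e he
    simp only [List.map_cons, List.flatten_cons] at he
    rw [used_append] at he
    rcases List.mem_append.1 he with h1 | h1
    · exact ⟨a, List.mem_cons_self, h1⟩
    · have hco : (1 : FreeGroup (Fin n)) * mk a.toWord * (1 : FreeGroup (Fin n))⁻¹ ∈ H := by
        rw [mk_toWord]
        simpa using hl a (List.mem_cons_self)
      rw [used_coset hT _ hco] at h1
      obtain ⟨b, hb, hbe⟩ := ih (fun x hx => hl x (List.mem_cons_of_mem a hx)) e h1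
      exact ⟨b, List.mem_cons_of_mem a hb, hbe⟩

theorem used_mem_of_mem_H (hT : IsSchreierTransversal H T) {h : FreeGroup (Fin n)}
    (hh : h ∈ H) {S : Set (FreeGroup (Fin n))} (hS : Subgroup.closure S = H) :
    ∀ e ∈ used H T 1 h.toWord, ∃ a ∈ S ∪ S⁻¹, e ∈ used H T 1 a.toWord := by
  intro e he
  have hmem : h ∈ Submonoid.closure (S ∪ S⁻¹) := by
    have h1 : h ∈ Subgroup.closure S := hS ▸ hh
    have h2 : h ∈ (Subgroup.closure S).toSubmonoid := h1
    rw [Subgroup.closure_toSubmonoid S] at h2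
    exact h2
  obtain ⟨l, hl, hprod⟩ := Submonoid.exists_list_of_mem_closure hmem
  have hlH : ∀ a ∈ l, a ∈ H := by
    intro a ha
    have := hl a ha
    rcases this with h' | h'
    · exact hS ▸ Subgroup.subset_closure h'
    · have h'' : a⁻¹ ∈ S := h'
      have h3 : a⁻¹ ∈ H := hS ▸ Subgroup.subset_closure h''
      simpa using H.inv_mem h3
  have hred : Red ((l.map FreeGroup.toWord).flatten) h.toWord := by
    have : h.toWord = reduce ((l.map FreeGroup.toWord).flatten) := by
      rw [← toWord_mk (L₁ := (l.map FreeGroup.toWord).flatten), mk_join_map_toWord, hprod]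
    rw [this]
    exact reduce.red
  have he2 := used_red_subset hred 1 e he
  obtain ⟨a, ha, hae⟩ := used_prod_subset hT l hlH e he2
  exact ⟨a, hl a ha, hae⟩

end Edges

section Main

variable {n : ℕ} {H : Subgroup (FreeGroup (Fin n))} {T : Set (FreeGroup (Fin n))}

theorem nte_word (hT : IsSchreierTransversal H T) {t : FreeGroup (Fin n)}
    {y : Fin n × Bool} (h : (t, y) ∈ NTE H T) :
    (t * ltr y * (phi H T (t * ltr y))⁻¹).toWord =
      t.toWord ++ [y] ++ (phi H T (t * ltr y))⁻¹.toWord := by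
  obtain ⟨htT, hout⟩ := h
  replace htT : t ∈ T := htT
  replace hout : t * ltr y ∉ T := hout
  set t' := phi H T (t * ltr y) with ht'
  have ht'T : t' ∈ T := phi_mem hT _
  -- the concatenation is a word for the product
  have hmk : mk (t.toWord ++ [y] ++ t'⁻¹.toWord) = t * ltr y * t'⁻¹ := by
    rw [← mul_mk, ← mul_mk, mk_toWord, mk_toWord, ltr]
  -- junction 1 : the last letter of t.toWord does not cancel y
  have hj1 : ∀ a ∈ t.toWord.getLast?, NC a y := by
    intro a ha
    intro ⟨h1, h2⟩
    have haz : a = (y.1, !y.2) := Prod.ext h1 h2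
    have hne : t.toWord ≠ [] := by
      intro h0
      rw [h0] at ha
      simp at ha
    rcases List.eq_nil_or_concat t.toWord with h0 | ⟨A, z, h0⟩
    · exact hne h0
    · rw [List.concat_eq_append] at h0
      have hza : z = a := by
        have e1 : t.toWord.getLast? = some z := by rw [h0]; exact List.getLast?_concat
        rw [e1] at ha
        exact (Option.some_injective _ ha.symm).symm
      have hword : (t * ltr y).toWord = A := mul_ltr_of_concat (by rw [h0, hza, haz])
      have : t * ltr y ∈ T := by
        rw [← mk_toWord (x := t * ltr y), hword]
        exact prefix_mem_T hT htT h0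
      exact hout this
  -- junction 2 : y does not cancel the first letter of t'⁻¹.toWord
  have hj2 : ∀ b ∈ t'⁻¹.toWord.head?, NC y b := by
    intro b hb
    intro ⟨h1, h2⟩
    -- b is the inverse of the last letter of t'.toWord
    have hne : t'⁻¹.toWord ≠ [] := by
      intro h0
      rw [h0] at hb
      simp at hb
    have hbinv : t'.toWord.getLast? = some (b.1, !b.2) := by
      rw [toWord_inv] at hb
      rw [FreeGroup.invRev] at hb
      rcases List.eq_nil_or_concat t'.toWord with h0 | ⟨A, z, h0⟩
      · rw [h0] at hb; simp at hb
      · rw [List.concat_eq_append] at h0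
        rw [h0] at hb
        simp at hb
        rw [h0, List.getLast?_concat]
        rw [← hb]
        simp
    -- so t'.toWord ends in y
    have hz : t'.toWord.getLast? = some y := by
      rw [hbinv]
      congr 1
      exact Prod.ext h1.symm h2.symm
    rcases List.eq_nil_or_concat t'.toWord with h0 | ⟨A, z, h0⟩
    · rw [h0] at hz; simp at hz
    · rw [List.concat_eq_append] at h0
      have hzy : z = y := by
        have e1 : t'.toWord.getLast? = some z := by rw [h0]; exact List.getLast?_concat
        rw [e1] at hz
        exact Option.some_injective _ hz
      -- mk A ∈ T and t * (mk A)⁻¹ ∈ H, so t = mk A, so t * ltr y = t' ∈ T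
      have hAT : (mk A : FreeGroup (Fin n)) ∈ T := prefix_mem_T hT ht'T h0
      have hAmul : (mk A : FreeGroup (Fin n)) * ltr y = t' := by
        rw [← hzy]; exact mk_dropLast_mul h0
      have hH : t * (mk A : FreeGroup (Fin n))⁻¹ ∈ H := by
        have h5 : t * ltr y * t'⁻¹ ∈ H := mul_phi_inv_mem hT _
        have h6 : t * (mk A : FreeGroup (Fin n))⁻¹ = t * ltr y * ((mk A : FreeGroup (Fin n)) * ltr y)⁻¹ := by
          group
        rw [h6, hAmul]
        exact h5
      have htA : t = mk A := by
        rw [← phi_fix hT htT]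
        exact phi_eq hT hAT hH
      apply hout
      rw [htA, hAmul]
      exact ht'T
  -- the concatenation is reduced
  have hchain : List.Chain' NC (t.toWord ++ [y] ++ t'⁻¹.toWord) := by
    rw [List.append_assoc]
    refine (chain'_toWord t).append ?_ ?_
    · refine List.isChain_cons.2 ⟨hj2, chain'_toWord _⟩
    · intro a ha b hb
      have hb' : b = y := by
        rw [List.singleton_append, List.head?_cons, Option.mem_some_iff] at hb
        exact hb.symm
      rw [hb']
      exact hj1 a ha
  rw [← hmk, toWord_mk]
  exact reduce_eq_self_of_chain' hchain

theorem nte_mem_used (hT : IsSchreierTransversal H T) {t : FreeGroup (Fin n)}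
    {y : Fin n × Bool} (h : (t, y) ∈ NTE H T) :
    (t, y) ∈ used H T 1 (t * ltr y * (phi H T (t * ltr y))⁻¹).toWord := by
  rw [nte_word hT h, List.append_assoc, used_append]
  refine List.mem_append.2 (Or.inr ?_)
  have h1 : (1 : FreeGroup (Fin n)) * mk t.toWord = t := by rw [mk_toWord, one_mul]
  rw [h1]
  show (t, y) ∈ (phi H T t, y) :: used H T (t * ltr y) _
  rw [phi_fix hT h.1]
  exact List.mem_cons_self

theorem nte_finite_of_fg (hT : IsSchreierTransversal H T) (hfg : H.FG) :
    (NTE H T).Finite := by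
  obtain ⟨S, hS⟩ := (Subgroup.fg_iff H).1 hfg
  obtain ⟨hSclos, hSfin⟩ := hS
  have hE : (⋃ a ∈ (S ∪ S⁻¹ : Set (FreeGroup (Fin n))),
      {e | e ∈ used H T 1 a.toWord}).Finite := by
    apply Set.Finite.biUnion (hSfin.union hSfin.inv)
    intro a _
    exact (used H T 1 a.toWord).finite_toSet
  apply hE.subset
  rintro ⟨t, y⟩ hty
  have hH : t * ltr y * (phi H T (t * ltr y))⁻¹ ∈ H := mul_phi_inv_mem hT _
  obtain ⟨a, ha, hae⟩ := used_mem_of_mem_H hT hH hSclos (t, y) (nte_mem_used hT hty)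
  exact Set.mem_biUnion ha hae

theorem fg_of_nte_finite (hT : IsSchreierTransversal H T) (hfin : (NTE H T).Finite) :
    H.FG := by
  classical
  set Sgen : Set (FreeGroup (Fin n)) :=
    (fun p : FreeGroup (Fin n) × (Fin n × Bool) =>
      p.1 * ltr p.2 * (phi H T (p.1 * ltr p.2))⁻¹) '' NTE H T with hSdef
  have hSfin : Sgen.Finite := hfin.image _
  have hSsub : Sgen ⊆ (H : Set (FreeGroup (Fin n))) := by
    rintro s ⟨p, -, rfl⟩
    exact mul_phi_inv_mem hT _
  have key : ∀ (u : List (Fin n × Bool)) (g : FreeGroup (Fin n)),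
      phi H T g * mk u * (phi H T (g * mk u))⁻¹ ∈ Subgroup.closure Sgen := by
    intro u
    induction u with
    | nil =>
      intro g
      have h0 : mk ([] : List (Fin n × Bool)) = (1 : FreeGroup (Fin n)) := rfl
      rw [h0, mul_one, mul_one, mul_inv_cancel]
      exact Subgroup.one_mem _
    | cons y u ih =>
      intro g
      have hmk : (mk (y :: u) : FreeGroup (Fin n)) = ltr y * mk u := by
        rw [ltr, mul_mk]; rfl
      have hphi1 : phi H T (phi H T g * ltr y) = phi H T (g * ltr y) := by
        apply phi_coset hT
        have h4 : phi H T g * ltr y * (g * ltr y)⁻¹ = phi H T g * g⁻¹ := by group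
        rw [h4]
        have h2 := mul_phi_inv_mem hT g
        have h3 : phi H T g * g⁻¹ = (g * (phi H T g)⁻¹)⁻¹ := by group
        rw [h3]; exact H.inv_mem h2
      have hfirst : phi H T g * ltr y * (phi H T (g * ltr y))⁻¹ ∈ Subgroup.closure Sgen := by
        by_cases hmem : phi H T g * ltr y ∈ T
        · have h5 : phi H T (g * ltr y) = phi H T g * ltr y := by
            rw [← hphi1]; exact phi_fix hT hmem
          rw [h5, mul_inv_cancel]
          exact Subgroup.one_mem _
        · apply Subgroup.subset_closure
          refine ⟨(phi H T g, y), ⟨phi_mem hT g, hmem⟩, ?_⟩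
          simp only
          rw [hphi1]
      have hsecond := ih (g * ltr y)
      have hphi2 : phi H T (g * ltr y * mk u) = phi H T (g * mk (y :: u)) := by
        rw [hmk, mul_assoc]
      rw [hphi2] at hsecond
      have hsplit : phi H T g * mk (y :: u) * (phi H T (g * mk (y :: u)))⁻¹ =
          (phi H T g * ltr y * (phi H T (g * ltr y))⁻¹) *
          (phi H T (g * ltr y) * mk u * (phi H T (g * mk (y :: u)))⁻¹) := by
        rw [hmk]; group
      rw [hsplit]
      exact Subgroup.mul_mem _ hfirst hsecond
  have hHsub : ∀ h ∈ H, h ∈ Subgroup.closure Sgen := by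
    intro h hh
    have h1 := key h.toWord 1
    rw [phi_one hT, one_mul, mk_toWord] at h1
    have h2 : phi H T h = 1 := phi_eq hT (one_mem_T hT) (by simpa using hh)
    rw [h2] at h1
    simpa using h1
  refine (Subgroup.fg_iff H).2 ⟨Sgen, ?_, hSfin⟩
  apply le_antisymm
  · rw [Subgroup.closure_le]
    exact hSsub
  · exact fun h hh => hHsub h hh

theorem rT_eq_half (hT : IsSchreierTransversal H T) (i : ℕ) :
    rT n T i = ((NTEle H T i).ncard : ℚ) / 2 := by
  have h := key_identity hT i
  have hq : (GammaT T i : ℚ) * (2 * (n : ℚ)) + 2 =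
      2 * (GammaT T i : ℚ) + (gammaT T (i+1) : ℚ) + ((NTEle H T i).ncard : ℚ) := by
    exact_mod_cast h
  rw [rT]
  linear_combination hq / 2

theorem main_iff (hT : IsSchreierTransversal H T) :
    (∃ N : ℕ, ∀ i : ℕ, N ≤ i → rT n T i = rT n T N) ↔ H.FG := by
  constructor
  · rintro ⟨N, hN⟩
    apply fg_of_nte_finite hT
    by_contra hinf
    replace hinf : (NTE H T).Infinite := hinf
    obtain ⟨s, hsub, hsfin, hscard⟩ :=
      hinf.exists_subset_ncard_eq ((NTEle H T N).ncard + 1)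
    set K := hsfin.toFinset.sup (fun p => FreeGroup.norm p.1) with hK
    set M := N + K with hM
    have hsM : s ⊆ NTEle H T M := by
      intro p hp
      refine ⟨hsub hp, ?_⟩
      have h1 : FreeGroup.norm p.1 ≤ K := by
        have h2 := Finset.le_sup (f := fun p => FreeGroup.norm p.1) (hsfin.mem_toFinset.2 hp)
        simpa using h2
      omega
    have hle : (NTEle H T N).ncard + 1 ≤ (NTEle H T M).ncard := by
      rw [← hscard]
      exact Set.ncard_le_ncard hsM (NTEle_finite H T M)
    have heq : rT n T M = rT n T N := hN M (by omega)
    rw [rT_eq_half hT M, rT_eq_half hT N] at heq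
    have heq2 : (NTEle H T M).ncard = (NTEle H T N).ncard := by
      have h6 : ((NTEle H T M).ncard : ℚ) = ((NTEle H T N).ncard : ℚ) := by
        linarith
      exact_mod_cast h6
    omega
  · intro hfg
    have hfin := nte_finite_of_fg hT hfg
    set N := hfin.toFinset.sup (fun p => FreeGroup.norm p.1) with hN
    have hEq : ∀ j, N ≤ j → NTEle H T j = NTE H T := by
      intro j hj
      ext p
      refine ⟨fun hp => hp.1, fun hp => ⟨hp, ?_⟩⟩
      have h1 : FreeGroup.norm p.1 ≤ N := by
        have h2 := Finset.le_sup (f := fun p => FreeGroup.norm p.1) (hfin.mem_toFinset.2 hp)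
        simpa using h2
      omega
    refine ⟨N, fun i hi => ?_⟩
    rw [rT_eq_half hT i, rT_eq_half hT N, hEq i hi, hEq N le_rfl]

end Main

end SchreierAux

/-- The sequence `r_T(i)` is eventually constant if and only if `H` is finitely
generated. -/
theorem rT_eventually_constant_iff_fg {n : ℕ} (hn : 1 ≤ n)
    (H : Subgroup (FreeGroup (Fin n))) (T : Set (FreeGroup (Fin n)))
    (hT : IsSchreierTransversal H T) :
    (∃ N : ℕ, ∀ i : ℕ, N ≤ i → rT n T i = rT n T N) ↔ H.FG :=
  SchreierAux.main_iff hT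
end

section
/- Let H be a supnormal subgroup of F. Then H is finitely generated if and only if H has finite index in F. -/
open FreeGroup

namespace SupAux

open List

variable {α : Type*} [DecidableEq α]

/-- The relation saying two adjacent letters do not cancel. -/
def NC (a b : α × Bool) : Prop := ¬(a.1 = b.1 ∧ a.2 = !b.2)

/-- A word is reduced iff no adjacent letters cancel. -/
def IsRed (L : List (α × Bool)) : Prop := List.Chain' NC L

theorem IsRed.reduce_eq {L : List (α × Bool)} (h : IsRed L) : reduce L = L := by
  induction L with
  | nil => rfl
  | cons x L ih =>
    rcases L with _ | ⟨y, L'⟩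
    · rfl
    · have h' : IsRed (y :: L') := h.tail
      have hxy : NC x y := (List.isChain_cons_cons.mp h).1
      rw [reduce.cons, ih h']
      simp only [NC] at hxy
      simp only [List.casesOn]
      rw [if_neg hxy]

theorem isRed_reduce (L : List (α × Bool)) : IsRed (reduce L) := by
  induction L with
  | nil => exact List.isChain_nil
  | cons x L ih =>
    rw [reduce.cons]
    rcases hL : reduce L with _ | ⟨hd, tl⟩
    · exact List.isChain_singleton x
    · rw [hL] at ih
      by_cases hc : x.1 = hd.1 ∧ x.2 = !hd.2
      · simp only [List.casesOn]
        rw [if_pos hc]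
        exact ih.tail
      · simp only [List.casesOn]
        rw [if_neg hc]
        exact List.isChain_cons_cons.mpr ⟨hc, ih⟩

theorem isRed_toWord (x : FreeGroup α) : IsRed x.toWord := by
  have := isRed_reduce x.toWord
  rwa [reduce_toWord] at this

theorem isRed_invRev {L : List (α × Bool)} (h : IsRed L) : IsRed (invRev L) := by
  have : reduce (invRev L) = invRev L := by
    rw [reduce_invRev, h.reduce_eq]
  have h2 := isRed_reduce (invRev L)
  rwa [this] at h2

/-- Cancellation lemma: the reduction of the concatenation of two reduced words. -/
theorem cancel : ∀ (L₂ L₁ : List (α × Bool)), IsRed L₁ → IsRed L₂ →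
    ∃ U D Y, L₁ = U ++ D ∧ L₂ = invRev D ++ Y ∧ reduce (L₁ ++ L₂) = U ++ Y ∧ IsRed (U ++ Y) := by
  intro L₂
  induction L₂ with
  | nil =>
    intro L₁ h₁ _
    exact ⟨L₁, [], [], by simp, by simp [invRev], by simpa using h₁.reduce_eq, by simpa using h₁⟩
  | cons b L₂' ih =>
    intro L₁ h₁ h₂
    rcases List.eq_nil_or_concat L₁ with rfl | ⟨L₁', a, rfl⟩
    · exact ⟨[], [], b :: L₂', by simp, by simp [invRev], by simpa using h₂.reduce_eq,
        by simpa using h₂⟩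
    · rw [List.concat_eq_append] at h₁
      simp only [List.concat_eq_append]
      by_cases hab : a = (b.1, !b.2)
      · -- cancellation happens
        subst hab
        have hstep : Red.Step (L₁' ++ [(b.1, !b.2)] ++ b :: L₂') (L₁' ++ L₂') := by
          have : L₁' ++ [(b.1, !b.2)] ++ b :: L₂' = L₁' ++ (b.1, !b.2) :: (b.1, !(!b.2)) :: L₂' := by
            simp
          rw [this]
          exact Red.Step.not
        obtain ⟨U, D, Y, e₁, e₂, e₃, e₄⟩ := ih L₁' (h₁.prefix ⟨[(b.1, !b.2)], rfl⟩) (h₂.tail)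
        refine ⟨U, D ++ [(b.1, !b.2)], Y, by rw [e₁]; simp, ?_, ?_, e₄⟩
        · simp only [invRev, List.reverse_append, List.reverse_singleton, List.map_append,
            List.map_cons]
          simp only [invRev] at e₂
          simp [e₂]
        · rw [reduce.Step.eq hstep]
          exact e₃
      · -- no cancellation: the whole thing is reduced
        have hjunc : NC a b := by
          simp only [NC]
          rintro ⟨hx, hb⟩
          exact hab (Prod.ext hx hb)
        have hred : IsRed ((L₁' ++ [a]) ++ b :: L₂') := by
          apply List.IsChain.append h₁ h₂
          intro x hx y hy
          simp at hx hy
          subst hx; subst hy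
          exact hjunc
        refine ⟨L₁' ++ [a], [], b :: L₂', by simp, by simp [invRev], ?_, hred⟩
        simpa using hred.reduce_eq


theorem mem_of_mem_union {S : Set (FreeGroup α)} {H : Subgroup (FreeGroup α)}
    (hSH : Subgroup.closure S ≤ H) {y : FreeGroup α} (hy : y ∈ S ∪ S⁻¹) : y ∈ H := by
  rcases hy with hy | hy
  · exact hSH (Subgroup.subset_closure hy)
  · have : y⁻¹ ∈ S := Set.mem_inv.mp hy
    simpa using H.inv_mem (hSH (Subgroup.subset_closure this))

/-- Every prefix of the reduced word of a product of generators lies in the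
right coset of a prefix of a generator. -/
theorem prefix_coset (H : Subgroup (FreeGroup α)) (S : Set (FreeGroup α))
    (hSH : Subgroup.closure S ≤ H) (g₀ : FreeGroup α) (hg₀ : g₀ ∈ S) :
    ∀ (l : List (FreeGroup α)), (∀ y ∈ l, y ∈ S ∪ S⁻¹) →
    ∀ P, P <+: (l.prod).toWord →
    ∃ g Q, g ∈ S ∪ S⁻¹ ∧ Q <+: g.toWord ∧ mk P * (mk Q)⁻¹ ∈ H := by
  intro l
  induction l using List.reverseRecOn with
  | nil =>
    intro _ P hP
    have hP0 : P = [] := by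
      simpa using List.prefix_nil.mp (by simpa [FreeGroup.toWord_one] using hP)
    subst hP0
    exact ⟨g₀, [], Or.inl hg₀, List.nil_prefix, H.one_mem⟩
  | append_singleton l' s ih =>
    intro hmem P hP
    obtain ⟨U, D, Y, e1, e2, e3, e4⟩ :=
      cancel s.toWord (l'.prod).toWord (isRed_toWord _) (isRed_toWord _)
    have hW : ((l' ++ [s]).prod).toWord = U ++ Y := by
      rw [List.prod_append, List.prod_cons, List.prod_nil, mul_one,
        ← mk_toWord (x := l'.prod), ← mk_toWord (x := s), mul_mk, toWord_mk, e3]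
    rw [hW] at hP
    by_cases hlen : P.length ≤ U.length
    · have hPU : P <+: U := List.prefix_of_prefix_length_le hP (U.prefix_append Y) hlen
      have : P <+: (l'.prod).toWord := by
        rw [e1]; exact hPU.trans (U.prefix_append D)
      exact ih (fun y hy => hmem y (by simp [hy])) P this
    · have hUP : U <+: P :=
        List.prefix_of_prefix_length_le (U.prefix_append Y) hP (le_of_not_ge hlen)
      obtain ⟨Y₁, rfl⟩ := hUP
      have hY₁ : Y₁ <+: Y := (List.prefix_append_right_inj U).mp hP
      have hl' : l'.prod ∈ H :=
        H.list_prod_mem fun y hy => mem_of_mem_union hSH (hmem y (by simp [hy]))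
      refine ⟨s, invRev D ++ Y₁, hmem s (by simp), ?_, ?_⟩
      · rw [e2]; exact (List.prefix_append_right_inj (invRev D)).mpr hY₁
      · have : mk (U ++ Y₁) * (mk (invRev D ++ Y₁))⁻¹ = l'.prod := by
          rw [← mul_mk, ← mul_mk, ← inv_mk, mul_inv_rev, inv_inv, mul_assoc,
            ← mul_assoc (mk Y₁), mul_inv_cancel, one_mul, mul_mk, ← e1, mk_toWord]
        rw [this]
        exact hl'


theorem exists_letter [Fintype α] (hcard : 4 ≤ Fintype.card (α × Bool)) (a b c : α × Bool) :
    ∃ x : α × Bool, x ≠ a ∧ x ≠ b ∧ x ≠ c := by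
  by_contra h
  push_neg at h
  have hsub : (Finset.univ : Finset (α × Bool)) ⊆ {a, b, c} := by
    intro x _
    by_cases hxa : x = a
    · simp [hxa]
    by_cases hxb : x = b
    · simp [hxb]
    simp [h x hxa hxb]
  have h1 := Finset.card_le_card hsub
  have h2 : ({a, b, c} : Finset (α × Bool)).card ≤ 3 := by
    apply le_trans (Finset.card_insert_le _ _)
    have h3 := Finset.card_insert_le b ({c} : Finset (α × Bool))
    simp at h3 ⊢
    omega
  rw [Finset.card_univ] at h1
  omega

theorem exists_long_word [Fintype α] (hcard : 4 ≤ Fintype.card (α × Bool))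
    {N : Subgroup (FreeGroup α)} (hN : N.Normal) {z t : FreeGroup α}
    (hz : z ∈ N) (hz1 : z ≠ 1) (ht : t ≠ 1) :
    ∃ w ∈ N, t.toWord <+: w.toWord := by
  have hA : t.toWord ≠ [] := fun h => ht (by rw [← mk_toWord (x := t), h]; rfl)
  have hZ : z.toWord ≠ [] := fun h => hz1 (by rw [← mk_toWord (x := z), h]; rfl)
  obtain ⟨A', ℓ, hAe⟩ := List.eq_nil_or_concat t.toWord |>.resolve_left hA
  obtain ⟨zh, Z', hZe⟩ := List.exists_cons_of_ne_nil hZ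
  obtain ⟨Z'', zl, hZe'⟩ := List.eq_nil_or_concat z.toWord |>.resolve_left hZ
  rw [List.concat_eq_append] at hAe hZe'
  obtain ⟨c, hc1, hc2, hc3⟩ := exists_letter hcard (ℓ.1, !ℓ.2) (zh.1, !zh.2) zl
  have hNCl_c : NC ℓ c := by
    rintro ⟨h1, h2⟩
    refine hc1 (Prod.ext_iff.mpr ⟨h1.symm, ?_⟩)
    show c.2 = !ℓ.2
    rw [h2, Bool.not_not]
  have hNCc_zh : NC c zh := by
    rintro ⟨h1, h2⟩
    exact hc2 (Prod.ext_iff.mpr ⟨h1, h2⟩)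
  have hNCzl : NC zl (c.1, !c.2) := by
    rintro ⟨h1, h2⟩
    simp only [Bool.not_not] at h1 h2
    refine hc3 (Prod.ext_iff.mpr ⟨?_, ?_⟩).symm
    · exact h1
    · exact h2
  have hNCc' : NC (c.1, !c.2) (ℓ.1, !ℓ.2) := by
    rintro ⟨h1, h2⟩
    simp only [Bool.not_not] at h1 h2
    refine hc1 (Prod.ext_iff.mpr ⟨h1, ?_⟩)
    show c.2 = !ℓ.2
    rw [← h2, Bool.not_not]
  have hinvA : invRev t.toWord = (ℓ.1, !ℓ.2) :: invRev A' := by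
    rw [hAe]; simp [invRev]
  have hredL : IsRed (t.toWord ++ (c :: (z.toWord ++ ((c.1, !c.2) :: invRev t.toWord)))) := by
    apply List.IsChain.append (isRed_toWord t)
    · apply List.isChain_cons.mpr
      constructor
      · intro y hy
        rw [hZe] at hy
        simp only [List.cons_append, List.head?_cons, Option.mem_some_iff] at hy
        cases hy
        exact hNCc_zh
      · apply List.IsChain.append (isRed_toWord z)
        · apply List.isChain_cons.mpr
          refine ⟨?_, isRed_invRev (isRed_toWord t)⟩
          intro y hy
          rw [hinvA] at hy
          simp only [List.head?_cons, Option.mem_some_iff] at hy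
          cases hy
          exact hNCc'
        · intro x hx y hy
          rw [hZe'] at hx
          simp only [List.getLast?_append, List.getLast?_singleton, Option.or_some, Option.mem_some_iff, List.head?_cons] at hx hy
          cases hx; cases hy
          exact hNCzl
    · intro x hx y hy
      rw [hAe] at hx
      simp only [List.getLast?_append, List.getLast?_singleton, Option.or_some, Option.mem_some_iff, List.head?_cons] at hx hy
      cases hx; cases hy
      exact hNCl_c
  have hw : t * (mk [c] * z * (mk [c])⁻¹) * t⁻¹ =
      mk (t.toWord ++ (c :: (z.toWord ++ ((c.1, !c.2) :: invRev t.toWord)))) := by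
    conv_lhs => rw [← mk_toWord (x := t), ← mk_toWord (x := z)]
    rw [inv_mk, inv_mk, mul_mk, mul_mk, mul_mk, mul_mk]
    congr 1
    simp [invRev]
  refine ⟨t * (mk [c] * z * (mk [c])⁻¹) * t⁻¹, ?_, ?_⟩
  · exact hN.conj_mem _ (hN.conj_mem _ hz (mk [c])) t
  · rw [hw, toWord_mk, hredL.reduce_eq]
    exact ⟨_, rfl⟩


theorem main_index [Fintype α] (hcard : 4 ≤ Fintype.card (α × Bool))
    (H N : Subgroup (FreeGroup α)) (hN : N.Normal) (hNbot : N ≠ ⊥) (hNH : N ≤ H)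
    (hFG : H.FG) : H.index ≠ 0 := by
  obtain ⟨z, hz, hz1⟩ := N.bot_or_exists_ne_one.resolve_left hNbot
  obtain ⟨S, hSc, hSfin⟩ := (Subgroup.fg_iff H).mp hFG
  set S' : Set (FreeGroup α) := insert z S with hS'def
  have hS'fin : S'.Finite := hSfin.insert z
  have hS'c : Subgroup.closure S' = H := by
    apply _root_.le_antisymm
    · rw [Subgroup.closure_le]
      intro y hy
      rcases hy with rfl | hy
      · exact hNH hz
      · rw [← hSc]; exact Subgroup.subset_closure hy
    · rw [← hSc]; exact Subgroup.closure_mono (Set.subset_insert z S)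
  set R : ℕ := hS'fin.toFinset.sup (fun g => g.toWord.length) with hRdef
  have hbound : ∀ g', g' ∈ S' ∪ S'⁻¹ → g'.toWord.length ≤ R := by
    intro g' hg'
    rcases hg' with hg' | hg'
    · exact Finset.le_sup (f := fun g : FreeGroup α => g.toWord.length) (hS'fin.mem_toFinset.mpr hg')
    · have h1 : g'⁻¹ ∈ S' := Set.mem_inv.mp hg'
      have h2 : g'.toWord.length = g'⁻¹.toWord.length := by
        rw [toWord_inv, invRev_length]
      rw [h2]
      exact Finset.le_sup (f := fun g : FreeGroup α => g.toWord.length) (hS'fin.mem_toFinset.mpr h1)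
  have Key : ∀ g : FreeGroup α, ∃ g', g'.toWord.length ≤ R ∧ g' * g⁻¹ ∈ H := by
    intro g
    set KS : Set ℕ := {k | ∃ t, t * g⁻¹ ∈ H ∧ t.toWord.length = k} with hKSdef
    have hKSne : KS.Nonempty := ⟨g.toWord.length, g, by simp [H.one_mem], rfl⟩
    obtain ⟨t, htH, htlen⟩ : ∃ t, t * g⁻¹ ∈ H ∧ t.toWord.length = sInf KS := Nat.sInf_mem hKSne
    by_cases hle : t.toWord.length ≤ R
    · exact ⟨t, hle, htH⟩
    · have ht1 : t ≠ 1 := by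
        rintro rfl
        exact hle (by simp)
      obtain ⟨w, hwN, hpre⟩ := exists_long_word hcard hN hz hz1 ht1
      have hwH : w ∈ Subgroup.closure S' := hS'c.symm ▸ hNH hwN
      have hwH' : w ∈ Submonoid.closure (S' ∪ S'⁻¹) := by
        rw [← Subgroup.closure_toSubmonoid] at *
        exact hwH
      obtain ⟨l, hl, hprod⟩ := Submonoid.exists_list_of_mem_closure hwH'
      obtain ⟨g', Q, hg', hQ, hH⟩ :=
        prefix_coset H S' (le_of_eq hS'c) z (Set.mem_insert z S) l hl t.toWord
          (by rw [hprod]; exact hpre)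
      rw [mk_toWord] at hH
      refine ⟨mk Q, ?_, ?_⟩
      · calc (mk Q).toWord.length = (reduce Q).length := by rw [toWord_mk]
          _ ≤ Q.length := Red.length_le reduce.red
          _ ≤ g'.toWord.length := hQ.length_le
          _ ≤ R := hbound g' hg'
      · have h1 : mk Q * t⁻¹ ∈ H := by
          have := H.inv_mem hH
          simpa using this
        have := H.mul_mem h1 htH
        rwa [mul_assoc, ← mul_assoc t⁻¹, inv_mul_cancel, one_mul] at this
  -- conclude finite index
  have hball : Set.Finite {g : FreeGroup α | g.toWord.length ≤ R} := by
    have h1 : {g : FreeGroup α | g.toWord.length ≤ R} =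
        toWord ⁻¹' {l : List (α × Bool) | l.length ≤ R} := rfl
    rw [h1]
    exact (List.finite_length_le (α × Bool) R).preimage toWord_injective.injOn
  haveI : Finite {g : FreeGroup α // g.toWord.length ≤ R} := hball.to_subtype
  have hsurj : Function.Surjective
      (fun b : {g : FreeGroup α // g.toWord.length ≤ R} =>
        (QuotientGroup.mk b.1⁻¹ : FreeGroup α ⧸ H)) := by
    intro q
    induction q using QuotientGroup.induction_on with
    | H g =>
      obtain ⟨g', hlen, hmem⟩ := Key g⁻¹
      rw [inv_inv] at hmem
      refine ⟨⟨g', hlen⟩, ?_⟩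
      show QuotientGroup.mk g'⁻¹ = QuotientGroup.mk g
      rw [QuotientGroup.eq]
      simpa using hmem
  haveI : Finite (FreeGroup α ⧸ H) := Finite.of_surjective _ hsurj
  exact Subgroup.index_ne_zero_of_finite


theorem index_ne_zero_rank_one (H N : Subgroup (FreeGroup (Fin 1)))
    (hNbot : N ≠ ⊥) (hNH : N ≤ H) : H.index ≠ 0 := by
  obtain ⟨z, hz, hz1⟩ := N.bot_or_exists_ne_one.resolve_left hNbot
  set x : FreeGroup (Fin 1) := FreeGroup.of 0 with hxdef
  have hgen : ∀ g : FreeGroup (Fin 1), ∃ k : ℤ, x ^ k = g := by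
    intro g
    induction g using FreeGroup.induction_on with
    | C1 => exact ⟨0, rfl⟩
    | of y =>
      refine ⟨1, ?_⟩
      rw [zpow_one]
      have hy : y = 0 := Subsingleton.elim _ _
      rw [hxdef, hy]
    | inv_of y hy =>
      obtain ⟨k, hk⟩ := hy
      exact ⟨-k, by rw [zpow_neg, hk]⟩
    | mul y₁ y₂ h₁ h₂ =>
      obtain ⟨k₁, hk₁⟩ := h₁
      obtain ⟨k₂, hk₂⟩ := h₂
      exact ⟨k₁ + k₂, by rw [zpow_add, hk₁, hk₂]⟩
  obtain ⟨k, hk⟩ := hgen z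
  have hk0 : k ≠ 0 := by
    rintro rfl
    exact hz1 (by rw [← hk, zpow_zero])
  set K : ℤ := (k.natAbs : ℤ) with hKdef
  have hKpos : 0 < K := by
    rw [hKdef]
    exact_mod_cast Int.natAbs_pos.mpr hk0
  have hxK : x ^ K ∈ H := by
    rcases Int.natAbs_eq k with he | he
    · rw [hKdef, ← he, hk]; exact hNH hz
    · have h3 : x ^ K = (x ^ k)⁻¹ := by
        rw [hKdef, ← zpow_neg]
        congr 1
        omega
      rw [h3, hk]
      exact H.inv_mem (hNH hz)
  have hsurj : Function.Surjective (fun r : Fin k.natAbs =>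
      (QuotientGroup.mk (x ^ (r : ℤ)) : FreeGroup (Fin 1) ⧸ H)) := by
    intro q
    induction q using QuotientGroup.induction_on with
    | H g =>
      obtain ⟨m, hm⟩ := hgen g
      have hrlt : (m % K).toNat < k.natAbs := by
        have h1 : m % K < K := Int.emod_lt_of_pos m hKpos
        have h2 : 0 ≤ m % K := Int.emod_nonneg m (by omega)
        omega
      refine ⟨⟨(m % K).toNat, hrlt⟩, ?_⟩
      show QuotientGroup.mk (x ^ (((m % K).toNat : ℤ))) = QuotientGroup.mk g
      have h2 : 0 ≤ m % K := Int.emod_nonneg m (by omega)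
      rw [Int.toNat_of_nonneg h2]
      have hsplit : g = x ^ (m % K) * (x ^ K) ^ (m / K) := by
        rw [← zpow_mul, ← zpow_add, Int.emod_add_mul_ediv, hm]
      rw [hsplit]
      exact (QuotientGroup.mk_mul_of_mem _ (H.zpow_mem hxK _)).symm
  haveI : Finite (FreeGroup (Fin 1) ⧸ H) := Finite.of_surjective _ hsurj
  exact Subgroup.index_ne_zero_of_finite

end SupAux

open SupAux in
/-- A supnormal subgroup of a finitely generated free group is finitely
generated if and only if it has finite index. -/
theorem supnormal_fg_iff_finiteIndex {n : ℕ} (hn : 1 ≤ n)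
    (H : Subgroup (FreeGroup (Fin n)))
    (hsup : ∃ N : Subgroup (FreeGroup (Fin n)), N.Normal ∧ N ≠ ⊥ ∧ N ≤ H) :
    H.FG ↔ H.index ≠ 0 := by
  obtain ⟨N, hN, hNbot, hNH⟩ := hsup
  constructor
  · intro hFG
    rcases Nat.lt_or_ge n 2 with h2 | h2
    · have hn1 : n = 1 := by omega
      subst hn1
      exact index_ne_zero_rank_one H N hNbot hNH
    · have hcard : 4 ≤ Fintype.card (Fin n × Bool) := by
        rw [Fintype.card_prod, Fintype.card_fin, Fintype.card_bool]
        omega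
      exact main_index hcard H N hN hNbot hNH hFG
  · intro hidx
    haveI : H.FiniteIndex := ⟨hidx⟩
    haveI : Group.FG (FreeGroup (Fin n)) :=
      Group.fg_iff.mpr ⟨Set.range FreeGroup.of, FreeGroup.closure_range_of _, Set.finite_range _⟩
    haveI : Group.FG H := H.fg_of_index_ne_zero
    exact (Group.fg_iff_subgroup_fg H).mp this
end

section
/- Let F be the free group on a set X with |X| = 2. There exists a subgroup H of F such that H has exponential cogrowth (there exist a real number b > 1 and i₀ such that Γ_{F/H}(i) ≥ b^i for all i ≥ i₀), while H admits a Schreier transversal T with Γ_T(i) = i + 1 for all i ≥ 0. -/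
open FreeGroup

/-- The minimal length of a representative of the right coset `C` of `H`. -/
noncomputable def cosetMinLen {n : ℕ} (H : Subgroup (FreeGroup (Fin n)))
    (C : Quotient (QuotientGroup.rightRel H)) : ℕ :=
  sInf (FreeGroup.norm '' {g | Quotient.mk (QuotientGroup.rightRel H) g = C})

/-- The cogrowth function `Γ_{F/H}(i)`: the number of right cosets of `H`
whose shortest representative has length at most `i`. -/
noncomputable def cogrowth {n : ℕ} (H : Subgroup (FreeGroup (Fin n))) (i : ℕ) : ℕ :=
  Nat.card {C : Quotient (QuotientGroup.rightRel H) // cosetMinLen H C ≤ i}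

namespace SC

def bfun : ℤ → ℤ := fun n =>
  if n = 0 then 0
  else if 0 < n then (if n % 2 = 1 then -n else 2*n+1)
  else if n % 2 = 0 then -n
  else if n = -1 then 1
  else if n % 4 = 1 then (n-1)/2
  else -n-2

def binv : ℤ → ℤ := fun m =>
  if m = 0 then 0
  else if 0 < m then
    (if m % 2 = 0 then -m
     else if m = 1 then -1
     else if m % 4 = 1 then (m-1)/2
     else -m-2)
  else if m % 2 = 1 then -m
  else 2*m+1

lemma binv_bfun (n : ℤ) : binv (bfun n) = n := by
  unfold bfun
  split_ifs <;> (unfold binv; split_ifs <;> first | omega | simp_all)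

lemma bfun_binv (m : ℤ) : bfun (binv m) = m := by
  unfold binv
  split_ifs <;> (unfold bfun; split_ifs <;> first | omega | simp_all)

def bperm : Equiv.Perm ℤ := ⟨bfun, binv, binv_bfun, bfun_binv⟩

def aperm : Equiv.Perm ℤ := Equiv.addRight 1

noncomputable def phi : FreeGroup (Fin 2) →* Equiv.Perm ℤ :=
  FreeGroup.lift (fun i => if i = 0 then aperm else bperm)

noncomputable def rho (g : FreeGroup (Fin 2)) : ℤ := (phi g)⁻¹ 0

noncomputable def H : Subgroup (FreeGroup (Fin 2)) :=
  (MulAction.stabilizer (Equiv.Perm ℤ) (0:ℤ)).comap phi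

lemma mem_H_iff {g : FreeGroup (Fin 2)} : g ∈ H ↔ phi g 0 = 0 := by
  simp [H, MulAction.mem_stabilizer_iff, Equiv.Perm.smul_def]

lemma mul_inv_mem_H_iff {g t : FreeGroup (Fin 2)} :
    g * t⁻¹ ∈ H ↔ rho g = rho t := by
  rw [mem_H_iff, _root_.map_mul, _root_.map_inv, Equiv.Perm.mul_apply]
  unfold rho
  rw [← Equiv.Perm.eq_inv_iff_eq, eq_comm]

lemma rho_mul (g x : FreeGroup (Fin 2)) : rho (g * x) = (phi x)⁻¹ (rho g) := by
  simp [rho, _root_.map_mul, Equiv.Perm.mul_apply]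

lemma phi_a : phi (FreeGroup.of (0 : Fin 2)) = aperm := by
  simp [phi]

lemma phi_b : phi (FreeGroup.of (1 : Fin 2)) = bperm := by
  simp [phi]

lemma mk_single_true (i : Fin 2) : FreeGroup.mk [(i, true)] = FreeGroup.of i := rfl

lemma mk_single_false (i : Fin 2) : FreeGroup.mk [(i, false)] = (FreeGroup.of i)⁻¹ := by
  rw [← mk_single_true, FreeGroup.inv_mk]; rfl

lemma rho_step_af (g : FreeGroup (Fin 2)) :
    rho (g * FreeGroup.mk [((0:Fin 2), false)]) = rho g + 1 := by
  rw [rho_mul, mk_single_false, _root_.map_inv, inv_inv, phi_a]; rfl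

lemma rho_step_at (g : FreeGroup (Fin 2)) :
    rho (g * FreeGroup.mk [((0:Fin 2), true)]) = rho g - 1 := by
  rw [rho_mul, mk_single_true, phi_a]; rfl

lemma rho_step_bf (g : FreeGroup (Fin 2)) :
    rho (g * FreeGroup.mk [((1:Fin 2), false)]) = bfun (rho g) := by
  rw [rho_mul, mk_single_false, _root_.map_inv, inv_inv, phi_b]; rfl

lemma rho_step_bt (g : FreeGroup (Fin 2)) :
    rho (g * FreeGroup.mk [((1:Fin 2), true)]) = binv (rho g) := by
  rw [rho_mul, mk_single_true, phi_b]; rfl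

lemma rho_one : rho 1 = 0 := by simp [rho]



def letter : ℕ → Fin 2 × Bool := fun k =>
  if k % 2 = 0 then ((0 : Fin 2), decide (k % 4 = 2)) else ((1 : Fin 2), false)

def W (k : ℕ) : List (Fin 2 × Bool) := (List.range k).map letter

def w (k : ℕ) : FreeGroup (Fin 2) := FreeGroup.mk (W k)

lemma letter_fst (k : ℕ) : (letter k).1 = if k % 2 = 0 then (0 : Fin 2) else 1 := by
  unfold letter; split_ifs <;> rfl

lemma reduce_eq_self {l : List (Fin 2 × Bool)} (h : l.Chain' fun a b => a.1 ≠ b.1) :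
    FreeGroup.reduce l = l := by
  induction l with
  | nil => rfl
  | cons x l ih =>
    have h' : l.Chain' fun a b => a.1 ≠ b.1 := h.tail
    rw [FreeGroup.reduce.cons, ih h']
    cases l with
    | nil => rfl
    | cons y l' =>
      have hxy : x.1 ≠ y.1 := List.isChain_cons_cons.mp h |>.1
      simp only []
      rw [if_neg]
      intro hc
      exact hxy hc.1

lemma chain_W (k : ℕ) : (W k).Chain' fun a b => a.1 ≠ b.1 := by
  rw [List.Chain', List.isChain_iff_getElem]
  intro i hi
  simp only [W, List.get_eq_getElem, List.getElem_map, List.getElem_range]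
  rw [letter_fst, letter_fst]
  by_cases hp : i % 2 = 0
  · rw [if_pos hp, if_neg (by omega)]; decide
  · rw [if_neg hp, if_pos (by omega)]; decide

lemma toWord_w (k : ℕ) : (w k).toWord = W k := by
  rw [w, FreeGroup.toWord_mk, reduce_eq_self (chain_W k)]

lemma norm_w (k : ℕ) : (w k).norm = k := by
  rw [FreeGroup.norm, toWord_w, W, List.length_map, List.length_range]

def p (k : ℕ) : ℤ :=
  if k % 4 = 0 then ((k / 2 : ℕ) : ℤ)
  else if k % 4 = 1 then (((k+1) / 2 : ℕ) : ℤ)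
  else if k % 4 = 2 then -((k / 2 : ℕ) : ℤ)
  else -(((k+1) / 2 : ℕ) : ℤ)


lemma W_succ (k : ℕ) : W (k+1) = W k ++ [letter k] := by
  simp [W, List.range_succ]

lemma w_succ (k : ℕ) : w (k+1) = w k * FreeGroup.mk [letter k] := by
  rw [w, w, W_succ, ← FreeGroup.mul_mk]

lemma rho_w (k : ℕ) : rho (w k) = p k := by
  induction k with
  | zero =>
    have : w 0 = 1 := rfl
    rw [this, rho_one]; rfl
  | succ k ih =>
    rw [w_succ]
    have h4 : k % 4 = 0 ∨ k % 4 = 1 ∨ k % 4 = 2 ∨ k % 4 = 3 := by omega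
    rcases h4 with h|h|h|h
    · have hl : letter k = ((0:Fin 2), false) := by
        unfold letter
        rw [if_pos (by omega : k % 2 = 0), decide_eq_false (by omega : ¬ k % 4 = 2)]
      rw [hl, rho_step_af, ih]
      unfold p; split_ifs <;> omega
    · have hl : letter k = ((1:Fin 2), false) := by
        unfold letter; rw [if_neg (by omega : ¬ k % 2 = 0)]
      obtain ⟨j, rfl⟩ : ∃ j, k = 4*j+1 := ⟨k/4, by omega⟩
      rw [hl, rho_step_bf, ih]
      have hpk : p (4*j+1) = 2*j+1 := by unfold p; split_ifs <;> omega
      have hpk1 : p (4*j+1+1) = -(2*j+1) := by unfold p; split_ifs <;> omega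
      rw [hpk, hpk1]
      unfold bfun; split_ifs <;> omega
    · have hl : letter k = ((0:Fin 2), true) := by
        unfold letter
        rw [if_pos (by omega : k % 2 = 0), decide_eq_true (by omega : k % 4 = 2)]
      rw [hl, rho_step_at, ih]
      unfold p; split_ifs <;> omega
    · have hl : letter k = ((1:Fin 2), false) := by
        unfold letter; rw [if_neg (by omega : ¬ k % 2 = 0)]
      obtain ⟨j, rfl⟩ : ∃ j, k = 4*j+3 := ⟨k/4, by omega⟩
      rw [hl, rho_step_bf, ih]
      have hpk : p (4*j+3) = -(2*j+2) := by unfold p; split_ifs <;> omega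
      have hpk1 : p (4*j+3+1) = 2*j+2 := by unfold p; split_ifs <;> omega
      rw [hpk, hpk1]
      unfold bfun; split_ifs <;> omega

lemma p_inj : Function.Injective p := by
  intro k k' h
  unfold p at h
  split_ifs at h <;> omega

lemma p_surj : ∀ m : ℤ, ∃ k, p k = m := by
  intro m
  rcases lt_trichotomy m 0 with hm|hm|hm
  · by_cases he : m % 2 = 0
    · exact ⟨(-2*m-1).toNat, by unfold p; split_ifs <;> omega⟩
    · exact ⟨(-2*m).toNat, by unfold p; split_ifs <;> omega⟩
  · exact ⟨0, by unfold p; split_ifs <;> omega⟩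
  · by_cases he : m % 2 = 0
    · exact ⟨(2*m).toNat, by unfold p; split_ifs <;> omega⟩
    · exact ⟨(2*m-1).toNat, by unfold p; split_ifs <;> omega⟩

lemma w_inj : Function.Injective w := by
  intro k k' h
  apply p_inj
  rw [← rho_w, ← rho_w, h]

lemma transversal : ∀ g : FreeGroup (Fin 2), ∃! t, t ∈ Set.range w ∧ g * t⁻¹ ∈ H := by
  intro g
  obtain ⟨k, hk⟩ := p_surj (rho g)
  refine ⟨w k, ⟨⟨k, rfl⟩, ?_⟩, ?_⟩
  · rw [mul_inv_mem_H_iff, rho_w, hk]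
  · rintro t ⟨⟨k', rfl⟩, ht⟩
    rw [mul_inv_mem_H_iff, rho_w] at ht
    exact congrArg w (p_inj (by rw [← ht, hk]))

lemma prefix_closed : ∀ t ∈ Set.range w, ∀ k : ℕ,
    FreeGroup.mk ((FreeGroup.toWord t).take k) ∈ Set.range w := by
  rintro t ⟨m, rfl⟩ k
  rw [toWord_w]
  refine ⟨min k m, ?_⟩
  rw [w, W, W, ← List.map_take, List.take_range]

lemma gamma : ∀ i, GammaT (Set.range w) i = i + 1 := by
  intro i
  have hset : {t ∈ Set.range w | FreeGroup.norm t ≤ i} = w '' Set.Iic i := by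
    ext t
    simp only [Set.mem_setOf_eq, Set.mem_image, Set.mem_Iic]
    constructor
    · rintro ⟨⟨k, rfl⟩, hn⟩; exact ⟨k, by rwa [norm_w] at hn, rfl⟩
    · rintro ⟨k, hk, rfl⟩; exact ⟨⟨k, rfl⟩, by rw [norm_w]; exact hk⟩
  rw [GammaT, hset, Set.ncard_image_of_injective _ w_inj,
    ← Finset.coe_Iic, Set.ncard_coe_finset, Nat.card_Iic]


noncomputable def rhoQ : Quotient (QuotientGroup.rightRel H) → ℤ :=
  Quotient.lift rho (fun a b hab =>
    (mul_inv_mem_H_iff.mp (QuotientGroup.rightRel_apply.mp hab)).symm)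

lemma rhoQ_mk (g : FreeGroup (Fin 2)) :
    rhoQ (Quotient.mk (QuotientGroup.rightRel H) g) = rho g := rfl

lemma minlen_le (g : FreeGroup (Fin 2)) :
    cosetMinLen H (Quotient.mk (QuotientGroup.rightRel H) g) ≤ FreeGroup.norm g :=
  Nat.sInf_le ⟨g, rfl, rfl⟩

lemma finite_coset_ball (i : ℕ) :
    Finite {C : Quotient (QuotientGroup.rightRel H) // cosetMinLen H C ≤ i} := by
  have hball : {g : FreeGroup (Fin 2) | FreeGroup.norm g ≤ i}.Finite := by
    have hsub : {g : FreeGroup (Fin 2) | FreeGroup.norm g ≤ i} ⊆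
        (fun l => FreeGroup.mk l) '' {l : List (Fin 2 × Bool) | l.length ≤ i} := by
      intro g hg
      exact ⟨g.toWord, hg, FreeGroup.mk_toWord⟩
    exact ((List.finite_length_le _ i).image _).subset hsub
  have hrep : ∀ C : {C : Quotient (QuotientGroup.rightRel H) // cosetMinLen H C ≤ i},
      ∃ g : FreeGroup (Fin 2),
        Quotient.mk (QuotientGroup.rightRel H) g = C.1 ∧ FreeGroup.norm g ≤ i := by
    rintro ⟨C, hC⟩
    obtain ⟨a, ha⟩ := Quotient.exists_rep C
    have hne : (FreeGroup.norm ''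
        {g | Quotient.mk (QuotientGroup.rightRel H) g = C}).Nonempty :=
      ⟨FreeGroup.norm a, a, ha, rfl⟩
    obtain ⟨g, hg1, hg2⟩ := Nat.sInf_mem hne
    exact ⟨g, hg1, by rw [hg2]; exact hC⟩
  choose f hf1 hf2 using hrep
  have hinj : Function.Injective fun C => (⟨f C, hf2 C⟩ :
      {g : FreeGroup (Fin 2) | FreeGroup.norm g ≤ i}) := by
    intro C C' h
    apply Subtype.ext
    rw [← hf1 C, ← hf1 C']
    exact congrArg (Quotient.mk _) (congrArg Subtype.val h)
  haveI := hball.to_subtype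
  exact Finite.of_injective _ hinj

def pw (d : Bool) : List (Fin 2 × Bool) := [((1:Fin 2), false), ((0:Fin 2), !d)]

def blk : List Bool → List (Fin 2 × Bool)
  | [] => []
  | d :: s => pw d ++ blk s

def F : List Bool → ℤ → ℤ
  | [], x => x
  | d :: s, x => F s (2*x + if d then 2 else 0)

lemma blk_length (s : List Bool) : (blk s).length = 2 * s.length := by
  induction s with
  | nil => rfl
  | cons d s ih => simp [blk, pw, ih]; omega

lemma rho_blk : ∀ (s : List Bool) (g : FreeGroup (Fin 2)) (x : ℤ), rho g = x →
    0 < x → x % 2 = 0 → rho (g * FreeGroup.mk (blk s)) = F s x := by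
  intro s
  induction s with
  | nil => intro g x hg _ _; rw [blk, ← FreeGroup.one_eq_mk, mul_one, F, hg]
  | cons d s ih =>
    intro g x hg hx he
    have hbf : bfun x = 2*x + 1 := by unfold bfun; split_ifs <;> omega
    have h1 : blk (d :: s) = pw d ++ blk s := rfl
    rw [h1, ← FreeGroup.mul_mk, ← mul_assoc]
    have h2 : FreeGroup.mk (pw d) =
        FreeGroup.mk [((1:Fin 2), false)] * FreeGroup.mk [((0:Fin 2), !d)] := by
      rw [FreeGroup.mul_mk]; rfl
    have hstep : rho (g * FreeGroup.mk (pw d)) = 2*x + (if d then 2 else 0) := by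
      rw [h2, ← mul_assoc]
      cases d with
      | false =>
        rw [show (!false) = true from rfl, rho_step_at, rho_step_bf, hg, hbf]
        simp only [Bool.false_eq_true, if_false]
        ring
      | true =>
        rw [show (!true) = false from rfl, rho_step_af, rho_step_bf, hg, hbf]
        simp only [if_true]
        ring
    rw [F]
    exact ih _ _ hstep (by split_ifs at hstep ⊢ <;> omega)
      (by split_ifs at hstep ⊢ <;> omega)

lemma F_lt : ∀ (s t : List Bool), s.length = t.length → ∀ x y : ℤ, x < y →
    x % 2 = 0 → y % 2 = 0 → F s x < F t y := by
  intro s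
  induction s with
  | nil =>
    intro t ht x y h _ _
    cases t with
    | nil => simpa [F] using h
    | cons e t' => simp at ht
  | cons d s ih =>
    intro t ht x y h hx hy
    cases t with
    | nil => simp at ht
    | cons e t' =>
      simp only [F]
      refine ih t' (by simpa using ht) _ _ ?_ ?_ ?_ <;> split_ifs <;> omega

lemma F_inj : ∀ (s t : List Bool), s.length = t.length → ∀ x : ℤ, x % 2 = 0 →
    F s x = F t x → s = t := by
  intro s
  induction s with
  | nil =>
    intro t ht _ _ _
    cases t with
    | nil => rfl
    | cons e t' => simp at ht
  | cons d s ih =>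
    intro t ht x he hF
    cases t with
    | nil => simp at ht
    | cons e t' =>
    have hlen : s.length = t'.length := by simpa using ht
    cases d <;> cases e
    · simp only [F] at hF
      rw [ih t' hlen _ (by omega) hF]
    · exfalso
      simp only [F, if_neg Bool.false_ne_true, if_pos rfl] at hF
      exact absurd hF (ne_of_lt (F_lt s t' hlen (2*x+0) (2*x+2) (by omega) (by omega) (by omega)))
    · exfalso
      simp only [F, if_neg Bool.false_ne_true, if_pos rfl] at hF
      exact absurd hF.symm (ne_of_lt (F_lt t' s hlen.symm (2*x+0) (2*x+2) (by omega) (by omega) (by omega)))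
    · simp only [F] at hF
      rw [ih t' hlen _ (by omega) hF]


def uword (s : List Bool) : FreeGroup (Fin 2) :=
  FreeGroup.mk ([((0:Fin 2), false), ((0:Fin 2), false)] ++ blk s)

lemma rho_uword (s : List Bool) : rho (uword s) = F s 2 := by
  have hbase : FreeGroup.mk [((0:Fin 2), false), ((0:Fin 2), false)] =
      (1 : FreeGroup (Fin 2)) * FreeGroup.mk [((0:Fin 2), false)] *
        FreeGroup.mk [((0:Fin 2), false)] := by
    rw [one_mul, FreeGroup.mul_mk]; rfl
  have hrb : rho (FreeGroup.mk [((0:Fin 2), false), ((0:Fin 2), false)]) = 2 := by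
    rw [hbase, rho_step_af, rho_step_af, rho_one]; ring
  rw [uword, ← FreeGroup.mul_mk]
  exact rho_blk s _ 2 hrb (by norm_num) (by norm_num)

lemma norm_uword (s : List Bool) : FreeGroup.norm (uword s) ≤ 2 + 2 * s.length := by
  refine le_trans FreeGroup.norm_mk_le ?_
  simp [blk_length]
  omega

lemma two_pow_le_cogrowth (j i : ℕ) (hij : 2*j + 2 ≤ i) : 2^j ≤ cogrowth H i := by
  haveI := finite_coset_ball i
  have hcard : Nat.card (Fin j → Bool) = 2^j := by
    simp [Nat.card_eq_fintype_card]
  rw [cogrowth, ← hcard]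
  have hle : ∀ f : Fin j → Bool, cosetMinLen H
      (Quotient.mk (QuotientGroup.rightRel H) (uword (List.ofFn f))) ≤ i := by
    intro f
    refine le_trans (le_trans (minlen_le _) (norm_uword _)) ?_
    simp only [List.length_ofFn]
    omega
  apply Nat.card_le_card_of_injective
    (fun f => (⟨Quotient.mk (QuotientGroup.rightRel H) (uword (List.ofFn f)), hle f⟩ :
      {C // cosetMinLen H C ≤ i}))
  intro f f' h
  have h2 : rho (uword (List.ofFn f)) = rho (uword (List.ofFn f')) := by
    have h3 := congrArg rhoQ (congrArg Subtype.val h)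
    simpa [rhoQ_mk] using h3
  rw [rho_uword, rho_uword] at h2
  have h4 := F_inj _ _ (by simp) 2 (by norm_num) h2
  exact List.ofFn_injective h4

end SC

/-- There is a subgroup of the free group of rank 2 with exponential cogrowth
which admits a Schreier transversal of linear growth `Γ_T(i) = i + 1`. -/
theorem exists_subgroup_linear_transversal_exponential_cogrowth :
    ∃ (H : Subgroup (FreeGroup (Fin 2))) (T : Set (FreeGroup (Fin 2))),
      IsSchreierTransversal H T ∧
      (∀ i : ℕ, GammaT T i = i + 1) ∧
      ∃ b : ℝ, 1 < b ∧ ∃ i₀ : ℕ, ∀ i : ℕ, i₀ ≤ i → b ^ i ≤ (cogrowth H i : ℝ) := by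
  have h2 : (1:ℝ) < Real.sqrt 2 := by
    nlinarith [Real.sq_sqrt (by norm_num : (0:ℝ) ≤ 2), Real.sqrt_nonneg 2]
  have hb : (1:ℝ) < Real.sqrt (Real.sqrt 2) := by
    nlinarith [Real.sq_sqrt (by positivity : (0:ℝ) ≤ Real.sqrt 2),
      Real.sqrt_nonneg (Real.sqrt 2)]
  have hb4 : (Real.sqrt (Real.sqrt 2))^4 = 2 := by
    have ha : (Real.sqrt (Real.sqrt 2))^2 = Real.sqrt 2 :=
      Real.sq_sqrt (Real.sqrt_nonneg 2)
    have hc : (Real.sqrt 2)^2 = 2 := Real.sq_sqrt (by norm_num)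
    calc (Real.sqrt (Real.sqrt 2))^4 = ((Real.sqrt (Real.sqrt 2))^2)^2 := by ring
    _ = 2 := by rw [ha, hc]
  refine ⟨SC.H, Set.range SC.w, ⟨SC.transversal, SC.prefix_closed⟩, SC.gamma,
    Real.sqrt (Real.sqrt 2), hb, 6, ?_⟩
  intro i hi
  set j := (i-2)/2 with hjdef
  have hj1 : 2*j+2 ≤ i := by omega
  have hj2 : i ≤ 4*j := by omega
  calc (Real.sqrt (Real.sqrt 2)) ^ i ≤ (Real.sqrt (Real.sqrt 2)) ^ (4*j) :=
        pow_le_pow_right₀ hb.le hj2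
  _ = (2:ℝ)^j := by rw [pow_mul, hb4]
  _ ≤ (cogrowth SC.H i : ℝ) := by
      exact_mod_cast SC.two_pow_le_cogrowth j i hj1
end

section
/- Let H₁ and H₂ be subgroups of F and let H = H₁ ∩ H₂. Then Γ_{F/H}(i) ≤ Γ_{F/H₁}(i) · Γ_{F/H₂}(i) for every i ≥ 0. -/
open FreeGroup

lemma cosetMinLen_exists {n : ℕ} (H : Subgroup (FreeGroup (Fin n)))
    (C : Quotient (QuotientGroup.rightRel H)) :
    ∃ g, Quotient.mk (QuotientGroup.rightRel H) g = C ∧ g.norm = cosetMinLen H C := by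
  have hne : (FreeGroup.norm '' {g | Quotient.mk (QuotientGroup.rightRel H) g = C}).Nonempty := by
    obtain ⟨g, hg⟩ := Quotient.exists_rep C
    exact ⟨g.norm, g, hg, rfl⟩
  have := Nat.sInf_mem hne
  obtain ⟨g, hg, hnorm⟩ := this
  exact ⟨g, hg, hnorm⟩

lemma cosetMinLen_le {n : ℕ} (H : Subgroup (FreeGroup (Fin n))) (g : FreeGroup (Fin n)) :
    cosetMinLen H (Quotient.mk (QuotientGroup.rightRel H) g) ≤ g.norm :=
  Nat.sInf_le ⟨g, rfl, rfl⟩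

lemma cogrowth_finite {n : ℕ} (H : Subgroup (FreeGroup (Fin n))) (i : ℕ) :
    Finite {C : Quotient (QuotientGroup.rightRel H) // cosetMinLen H C ≤ i} := by
  classical
  let rep : {C : Quotient (QuotientGroup.rightRel H) // cosetMinLen H C ≤ i} →
      {l : List (Fin n × Bool) | l.length ≤ i} := fun C =>
    ⟨(Classical.choose (cosetMinLen_exists H C.1)).toWord, by
      have h := Classical.choose_spec (cosetMinLen_exists H C.1)
      simpa [FreeGroup.norm, h.2] using le_trans (le_of_eq h.2) C.2⟩
  have hinj : Function.Injective rep := by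
    intro C D h
    have hC := Classical.choose_spec (cosetMinLen_exists H C.1)
    have hD := Classical.choose_spec (cosetMinLen_exists H D.1)
    have : Classical.choose (cosetMinLen_exists H C.1)
        = Classical.choose (cosetMinLen_exists H D.1) :=
      FreeGroup.toWord_injective (congrArg Subtype.val h)
    ext1
    rw [← hC.1, ← hD.1, this]
  have : Finite {l : List (Fin n × Bool) | l.length ≤ i} := (List.finite_length_le _ i).to_subtype
  exact Finite.of_injective rep hinj

/-- Cogrowth of an intersection: `Γ_{F/(H₁ ∩ H₂)}(i) ≤ Γ_{F/H₁}(i) · Γ_{F/H₂}(i)`. -/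
theorem cogrowth_inter_le {n : ℕ} (hn : 1 ≤ n)
    (H₁ H₂ : Subgroup (FreeGroup (Fin n))) (i : ℕ) :
    cogrowth (H₁ ⊓ H₂) i ≤ cogrowth H₁ i * cogrowth H₂ i := by
  classical
  let φ₁ : Quotient (QuotientGroup.rightRel (H₁ ⊓ H₂)) → Quotient (QuotientGroup.rightRel H₁) :=
    Quotient.map' id (fun a b hab => by
      rw [QuotientGroup.rightRel_apply] at hab ⊢
      exact hab.1)
  let φ₂ : Quotient (QuotientGroup.rightRel (H₁ ⊓ H₂)) → Quotient (QuotientGroup.rightRel H₂) :=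
    Quotient.map' id (fun a b hab => by
      rw [QuotientGroup.rightRel_apply] at hab ⊢
      exact hab.2)
  have hφ₁ : ∀ g : FreeGroup (Fin n),
      φ₁ (Quotient.mk (QuotientGroup.rightRel (H₁ ⊓ H₂)) g)
        = Quotient.mk (QuotientGroup.rightRel H₁) g := fun g => rfl
  have hφ₂ : ∀ g : FreeGroup (Fin n),
      φ₂ (Quotient.mk (QuotientGroup.rightRel (H₁ ⊓ H₂)) g)
        = Quotient.mk (QuotientGroup.rightRel H₂) g := fun g => rfl
  have hb₁ : ∀ C, cosetMinLen (H₁ ⊓ H₂) C ≤ i → cosetMinLen H₁ (φ₁ C) ≤ i := by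
    intro C hC
    obtain ⟨g, hg, hnorm⟩ := cosetMinLen_exists (H₁ ⊓ H₂) C
    rw [← hg, hφ₁]
    exact le_trans (cosetMinLen_le H₁ g) (hnorm ▸ hC)
  have hb₂ : ∀ C, cosetMinLen (H₁ ⊓ H₂) C ≤ i → cosetMinLen H₂ (φ₂ C) ≤ i := by
    intro C hC
    obtain ⟨g, hg, hnorm⟩ := cosetMinLen_exists (H₁ ⊓ H₂) C
    rw [← hg, hφ₂]
    exact le_trans (cosetMinLen_le H₂ g) (hnorm ▸ hC)
  let f : {C : Quotient (QuotientGroup.rightRel (H₁ ⊓ H₂)) // cosetMinLen (H₁ ⊓ H₂) C ≤ i} →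
      {C : Quotient (QuotientGroup.rightRel H₁) // cosetMinLen H₁ C ≤ i} ×
      {C : Quotient (QuotientGroup.rightRel H₂) // cosetMinLen H₂ C ≤ i} :=
    fun C => (⟨φ₁ C.1, hb₁ C.1 C.2⟩, ⟨φ₂ C.1, hb₂ C.1 C.2⟩)
  have hinj : Function.Injective f := by
    intro C D h
    have h1 : φ₁ C.1 = φ₁ D.1 := congrArg Subtype.val (congrArg Prod.fst h)
    have h2 : φ₂ C.1 = φ₂ D.1 := congrArg Subtype.val (congrArg Prod.snd h)
    ext1
    obtain ⟨a, ha⟩ := Quotient.exists_rep C.1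
    obtain ⟨b, hb⟩ := Quotient.exists_rep D.1
    rw [← ha, ← hb] at h1 h2 ⊢
    rw [hφ₁ a, hφ₁ b] at h1
    rw [hφ₂ a, hφ₂ b] at h2
    have m1 : b * a⁻¹ ∈ H₁ := QuotientGroup.rightRel_apply.mp (Quotient.exact h1)
    have m2 : b * a⁻¹ ∈ H₂ := QuotientGroup.rightRel_apply.mp (Quotient.exact h2)
    exact Quotient.sound (QuotientGroup.rightRel_apply.mpr ⟨m1, m2⟩)
  have : Finite ({C : Quotient (QuotientGroup.rightRel H₁) // cosetMinLen H₁ C ≤ i} ×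
      {C : Quotient (QuotientGroup.rightRel H₂) // cosetMinLen H₂ C ≤ i}) := by
    have := cogrowth_finite H₁ i
    have := cogrowth_finite H₂ i
    infer_instance
  calc cogrowth (H₁ ⊓ H₂) i
      ≤ Nat.card ({C : Quotient (QuotientGroup.rightRel H₁) // cosetMinLen H₁ C ≤ i} ×
        {C : Quotient (QuotientGroup.rightRel H₂) // cosetMinLen H₂ C ≤ i}) :=
        Nat.card_le_card_of_injective f hinj
    _ = cogrowth H₁ i * cogrowth H₂ i := Nat.card_prod _ _
end

section
/- Let H be a subgroup of F, let T be a Schreier transversal for H with coset map φ, and let B_T = { t·x·φ(t·x)⁻¹ : t ∈ T, x ∈ X } \ {1} be the associated Schreier basis of H. For w ∈ F put d(w, T) = min{ l(t⁻¹·w) : t ∈ T }. Then every w ∈ F can be written as w = b₁^{ε₁} ⋯ b_k^{ε_k} · φ(w) with k ≤ d(w, T) ≤ l(w), b_j ∈ B_T and ε_j ∈ {+1, −1}. In particular, every element of H of length i is a product of at most i elements of B_T ∪ B_T⁻¹. -/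
open FreeGroup

/-- The Schreier basis of `H` associated with the transversal `T` and coset map
`φ`: the nontrivial elements `t·x·φ(t·x)⁻¹` for `t ∈ T`, `x ∈ X`. -/
def SchreierBasis {n : ℕ} (T : Set (FreeGroup (Fin n)))
    (φ : FreeGroup (Fin n) → FreeGroup (Fin n)) : Set (FreeGroup (Fin n)) :=
  {g | g ≠ 1 ∧ ∃ t ∈ T, ∃ x : Fin n,
    g = t * FreeGroup.of x * (φ (t * FreeGroup.of x))⁻¹}

/-- `d(w, T) = min { l(t⁻¹·w) : t ∈ T }`, the distance of `w` from `T`. -/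
noncomputable def distT {n : ℕ} (T : Set (FreeGroup (Fin n)))
    (w : FreeGroup (Fin n)) : ℕ :=
  sInf {m : ℕ | ∃ t ∈ T, FreeGroup.norm (t⁻¹ * w) = m}

lemma split_head {α : Type*} [DecidableEq α] (u : FreeGroup α) (hu : u ≠ 1) :
    ∃ (x : α) (s : Bool) (u' : FreeGroup α),
      u = FreeGroup.mk [(x, s)] * u' ∧ FreeGroup.norm u' + 1 = FreeGroup.norm u := by
  have hL : u.toWord ≠ [] := fun h => hu (toWord_eq_nil_iff.mp h)
  obtain ⟨⟨x, s⟩, tl, hcons⟩ := List.exists_cons_of_ne_nil hL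
  refine ⟨x, s, mk tl, ?_, ?_⟩
  · conv_lhs => rw [← mk_toWord (x := u), hcons]
    rw [mul_mk]
    rfl
  · have h1 : FreeGroup.norm u = tl.length + 1 := by
      rw [FreeGroup.norm, hcons]; simp
    have h2 : FreeGroup.norm (mk tl) ≤ tl.length := norm_mk_le
    have h3 : FreeGroup.norm u ≤ FreeGroup.norm (mk [(x, s)]) + FreeGroup.norm (mk tl) := by
      have := norm_mul_le (mk [(x, s)] : FreeGroup α) (mk tl)
      rw [mul_mk] at this
      rwa [show [(x, s)] ++ tl = u.toWord from hcons ▸ rfl, mk_toWord] at this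
    have h4 : FreeGroup.norm (mk [(x, s)] : FreeGroup α) ≤ 1 := norm_mk_le
    omega

/-- Every `w ∈ F` can be written as `b₁^{ε₁} ⋯ b_k^{ε_k} · φ(w)` with
`k ≤ d(w,T) ≤ l(w)`, `b_j` in the Schreier basis and `ε_j = ±1`; in particular
every element of `H` of length `i` is a product of at most `i` elements of
`B_T ∪ B_T⁻¹`. -/
theorem schreier_normal_form {n : ℕ} (hn : 1 ≤ n)
    (H : Subgroup (FreeGroup (Fin n))) (T : Set (FreeGroup (Fin n)))
    (hT : IsSchreierTransversal H T)
    (φ : FreeGroup (Fin n) → FreeGroup (Fin n))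
    (hφ : ∀ g : FreeGroup (Fin n), φ g ∈ T ∧ g * (φ g)⁻¹ ∈ H)
    (w : FreeGroup (Fin n)) :
    distT T w ≤ FreeGroup.norm w ∧
    (∃ k : ℕ, k ≤ distT T w ∧
      ∃ (b : Fin k → FreeGroup (Fin n)) (ε : Fin k → ℤ),
        (∀ j, b j ∈ SchreierBasis T φ) ∧ (∀ j, ε j = 1 ∨ ε j = -1) ∧
        w = (List.ofFn (fun j => b j ^ ε j)).prod * φ w) ∧
    (w ∈ H → ∃ k : ℕ, k ≤ FreeGroup.norm w ∧
      ∃ c : Fin k → FreeGroup (Fin n),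
        (∀ j, c j ∈ SchreierBasis T φ ∪ (fun g => g⁻¹) '' SchreierBasis T φ) ∧
        w = (List.ofFn c).prod) := by
  have hone : (1 : FreeGroup (Fin n)) ∈ T := by
    obtain ⟨t, ⟨ht, -⟩, -⟩ := hT.1 1
    have := hT.2 t ht 0
    simpa [← FreeGroup.one_eq_mk] using this
  have huniq : ∀ g t₁ t₂ : FreeGroup (Fin n), t₁ ∈ T → t₂ ∈ T →
      g * t₁⁻¹ ∈ H → g * t₂⁻¹ ∈ H → t₁ = t₂ := fun g t₁ t₂ h1 h2 m1 m2 =>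
    (hT.1 g).unique ⟨h1, m1⟩ ⟨h2, m2⟩
  have hφconst : ∀ v u : FreeGroup (Fin n), u * v⁻¹ ∈ H → φ u = φ v := by
    intro v u huv
    refine huniq u _ _ (hφ u).1 (hφ v).1 (hφ u).2 ?_
    have : u * (φ v)⁻¹ = (u * v⁻¹) * (v * (φ v)⁻¹) := by group
    rw [this]; exact H.mul_mem huv (hφ v).2
  have hφT : ∀ t ∈ T, φ t = t := fun t ht =>
    huniq t _ _ (hφ t).1 ht (hφ t).2 (by simpa using H.one_mem)
  have hφH : ∀ u ∈ H, φ u = 1 := fun u hu =>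
    huniq u _ _ (hφ u).1 hone (hφ u).2 (by simpa using hu)
  have hne : ∀ u : FreeGroup (Fin n),
      {m : ℕ | ∃ t ∈ T, FreeGroup.norm (t⁻¹ * u) = m}.Nonempty :=
    fun u => ⟨FreeGroup.norm u, 1, hone, by simp⟩
  have hdle : ∀ u : FreeGroup (Fin n), distT T u ≤ FreeGroup.norm u :=
    fun u => Nat.sInf_le ⟨1, hone, by simp⟩
  have main : ∀ m : ℕ, ∀ u : FreeGroup (Fin n), distT T u ≤ m →
      ∃ k : ℕ, k ≤ m ∧
      ∃ (b : Fin k → FreeGroup (Fin n)) (ε : Fin k → ℤ),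
        (∀ j, b j ∈ SchreierBasis T φ) ∧ (∀ j, ε j = 1 ∨ ε j = -1) ∧
        u = (List.ofFn (fun j => b j ^ ε j)).prod * φ u := by
    intro m
    induction m with
    | zero =>
      intro u hu
      have h0 : (0 : ℕ) ∈ {m : ℕ | ∃ t ∈ T, FreeGroup.norm (t⁻¹ * u) = m} :=
        (Nat.le_zero.mp hu) ▸ Nat.sInf_mem (hne u)
      obtain ⟨t, ht, hnt⟩ := h0
      have heq : t = u := inv_mul_eq_one.mp (FreeGroup.norm_eq_zero.mp hnt)
      refine ⟨0, le_refl _, Fin.elim0, Fin.elim0, fun j => j.elim0, fun j => j.elim0, ?_⟩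
      rw [List.ofFn_zero, List.prod_nil, one_mul, ← heq, hφT t ht]
    | succ m ih =>
      intro u hu
      rcases Nat.lt_or_ge (distT T u) (m + 1) with h | h
      · obtain ⟨k, hk, rest⟩ := ih u (Nat.lt_succ_iff.mp h)
        exact ⟨k, hk.trans (Nat.le_succ m), rest⟩
      · have hd : distT T u = m + 1 := le_antisymm hu h
        have hmem : (m + 1) ∈ {m : ℕ | ∃ t ∈ T, FreeGroup.norm (t⁻¹ * u) = m} :=
          hd ▸ Nat.sInf_mem (hne u)
        obtain ⟨t, ht, hnt⟩ := hmem
        have hne1 : t⁻¹ * u ≠ 1 := fun h1 => by simp [h1, FreeGroup.norm_one] at hnt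
        obtain ⟨x, s, u', hsplit, hnorm⟩ := split_head _ hne1
        set a : FreeGroup (Fin n) := mk [(x, s)] with ha
        have hu_eq : u = t * a * u' := by
          rw [mul_assoc, ← hsplit]; group
        set t' := φ (t * a) with ht'
        have ht'T : t' ∈ T := (hφ (t * a)).1
        have hbH : (t * a) * t'⁻¹ ∈ H := (hφ (t * a)).2
        set w' := t' * u' with hw'
        have hdist' : distT T w' ≤ m := by
          apply Nat.sInf_le
          refine ⟨t', ht'T, ?_⟩
          have he : t'⁻¹ * w' = u' := by rw [hw']; group
          rw [he]; omega
        obtain ⟨k, hk, b, ε, hb, hε, hprod⟩ := ih w' hdist'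
        have hφw : φ w' = φ u := by
          refine hφconst u w' ?_
          have : w' * u⁻¹ = ((t * a) * t'⁻¹)⁻¹ := by rw [hu_eq, hw']; group
          rw [this]; exact H.inv_mem hbH
        by_cases hb1 : t * a * t'⁻¹ = 1
        · have huw : u = w' := by
            rw [hu_eq, hw']
            have : t * a = t' := by
              have := mul_inv_eq_one.mp hb1; exact this
            rw [this]
          exact ⟨k, hk.trans (Nat.le_succ m), b, ε, hb, hε, by rw [huw]; exact hprod⟩
        · have hkey : ∃ b₀ ∈ SchreierBasis T φ, ∃ e : ℤ,
              (e = 1 ∨ e = -1) ∧ t * a * t'⁻¹ = b₀ ^ e := by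
            cases s with
            | true =>
              have haof : a = FreeGroup.of x := rfl
              refine ⟨t * a * t'⁻¹, ⟨hb1, t, ht, x, ?_⟩, 1, Or.inl rfl, (zpow_one _).symm⟩
              rw [← haof, ht']
            | false =>
              have hainv : a = (FreeGroup.of x)⁻¹ := by
                rw [ha]
                simp [FreeGroup.of, FreeGroup.inv_mk, FreeGroup.invRev]
              have hHmem : (t' * FreeGroup.of x) * t⁻¹ ∈ H := by
                have : (t' * FreeGroup.of x) * t⁻¹ = ((t * a) * t'⁻¹)⁻¹ := by
                  rw [hainv]; group
                rw [this]; exact H.inv_mem hbH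
              have hφt : φ (t' * FreeGroup.of x) = t :=
                huniq (t' * FreeGroup.of x) _ _ (hφ _).1 ht (hφ _).2 hHmem
              refine ⟨t' * FreeGroup.of x * t⁻¹, ⟨?_, t', ht'T, x, by rw [hφt]⟩,
                -1, Or.inr rfl, ?_⟩
              · intro hcon
                apply hb1
                have : t * a * t'⁻¹ = (t' * FreeGroup.of x * t⁻¹)⁻¹ := by
                  rw [hainv]; group
                rw [this, hcon]; simp
              · have : t * a * t'⁻¹ = (t' * FreeGroup.of x * t⁻¹)⁻¹ := by
                  rw [hainv]; group
                rw [this, zpow_neg_one]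
          obtain ⟨b₀, hb₀, e, he, hbe⟩ := hkey
          refine ⟨k + 1, by omega, Fin.cons b₀ b, Fin.cons e ε, ?_, ?_, ?_⟩
          · intro j
            refine Fin.cases ?_ ?_ j
            · simpa using hb₀
            · intro i; simpa using hb i
          · intro j
            refine Fin.cases ?_ ?_ j
            · simpa using he
            · intro i; simpa using hε i
          · have hstep : u = b₀ ^ e * ((List.ofFn fun j => b j ^ ε j).prod * φ w') := by
              rw [← hprod, ← hbe, hu_eq, hw']; group
            rw [List.ofFn_succ]
            simp only [Fin.cons_zero, Fin.cons_succ, List.prod_cons, Function.comp]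
            rw [← hφw, hstep, ← mul_assoc]
  refine ⟨hdle w, ?_, ?_⟩
  · obtain ⟨k, hk, b, ε, hb, hε, hprod⟩ := main (distT T w) w le_rfl
    exact ⟨k, hk, b, ε, hb, hε, hprod⟩
  · intro hwH
    obtain ⟨k, hk, b, ε, hb, hε, hprod⟩ := main (distT T w) w le_rfl
    refine ⟨k, hk.trans (hdle w), fun j => b j ^ ε j, ?_, ?_⟩
    · intro j
      show b j ^ ε j ∈ _
      rcases hε j with h1 | h1
      · rw [h1, zpow_one]; exact Or.inl (hb j)
      · rw [h1, zpow_neg_one]; exact Or.inr ⟨b j, hb j, rfl⟩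
    · rw [hprod, hφH w hwH, mul_one]
end

section
/- Let A be a subgroup of F and let T ⊆ F contain exactly one representative of each right coset of A, with 1 ∈ T. If the membership predicate of A and the membership predicate of T are both recursively enumerable, then the membership predicate of A is decidable. -/
open FreeGroup

section Aux

variable {α β : Type*} [Primcodable α] [Primcodable β]

theorem REPred.comp' {p : β → Prop} {f : α → β} (hp : REPred p) (hf : Computable f) :
    REPred fun a => p (f a) :=
  Partrec.comp hp hf

theorem REPred.and' {p q : α → Prop} (hp : REPred p) (hq : REPred q) :
    REPred fun a => p a ∧ q a := by
  have h : Partrec fun a => (Part.assert (p a) fun _ => Part.some ()).bind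
      fun _ => Part.assert (q a) fun _ => Part.some () :=
    Partrec.bind hp (Partrec.comp hq Computable.fst)
  refine h.dom_re.of_eq fun a => ?_
  rw [Part.bind_dom]
  constructor
  · rintro ⟨⟨hpa, _⟩, hqa, _⟩
    exact ⟨hpa, hqa⟩
  · rintro ⟨hpa, hqa⟩
    exact ⟨⟨hpa, trivial⟩, hqa, trivial⟩

theorem REPred.exists' {r : α × β → Prop} (hr : REPred r) :
    REPred fun a => ∃ b, r (a, b) := by
  obtain ⟨c, hc⟩ := Nat.Partrec.Code.exists_code.1 hr
  have key : ∀ p : α × β, r p ↔ (Nat.Partrec.Code.eval c (Encodable.encode p)).Dom := by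
    intro p
    rw [hc]
    simp [Encodable.encodek, Part.assert]
  set G : α → ℕ → Option Unit := fun a m =>
    (Encodable.decode (α := β) m.unpair.2).bind fun b =>
      (Nat.Partrec.Code.evaln m.unpair.1 c (Encodable.encode (a, b))).map fun _ => ()
    with hG_def
  have hG : Computable₂ G := by
    have h1 : Primrec fun x : α × ℕ => (Encodable.decode (α := β) x.2.unpair.2) :=
      Primrec.decode.comp (Primrec.snd.comp (Primrec.unpair.comp Primrec.snd))
    have h2a : Primrec fun q : (α × ℕ) × β =>
        (((q.1.2.unpair.1, c), Encodable.encode (q.1.1, q.2)) :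
          (ℕ × Nat.Partrec.Code) × ℕ) :=
      Primrec.pair
        (Primrec.pair
          (Primrec.fst.comp (Primrec.unpair.comp (Primrec.snd.comp Primrec.fst)))
          (Primrec.const c))
        (Primrec.encode.comp (Primrec.pair (Primrec.fst.comp Primrec.fst) Primrec.snd))
    have h2 : Primrec fun q : (α × ℕ) × β =>
        Nat.Partrec.Code.evaln q.1.2.unpair.1 c (Encodable.encode (q.1.1, q.2)) :=
      Nat.Partrec.Code.primrec_evaln.comp h2a
    have h3 : Primrec fun q : (α × ℕ) × β =>
        (Nat.Partrec.Code.evaln q.1.2.unpair.1 c (Encodable.encode (q.1.1, q.2))).map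
          fun _ => () :=
      Primrec.option_map h2 (Primrec.const ()).to₂
    exact (Primrec.option_bind h1 h3.to₂).to_comp
  have hF : Partrec fun a => Nat.rfindOpt (G a) := Partrec.rfindOpt hG
  refine hF.dom_re.of_eq fun a => ?_
  rw [Nat.rfindOpt_dom]
  constructor
  · rintro ⟨m, u, hu⟩
    simp only [hG_def, Option.mem_def, Option.bind_eq_some_iff, Option.map_eq_some_iff] at hu
    obtain ⟨b, hb, v, hv, -⟩ := hu
    refine ⟨b, (key (a, b)).2 ?_⟩
    exact Part.dom_iff_mem.2 ⟨v, Nat.Partrec.Code.evaln_sound hv⟩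
  · rintro ⟨b, hb⟩
    obtain ⟨x, hx⟩ := Part.dom_iff_mem.1 ((key (a, b)).1 hb)
    obtain ⟨k, hk⟩ := Nat.Partrec.Code.evaln_complete.1 hx
    refine ⟨Nat.pair k (Encodable.encode b), (), ?_⟩
    simp only [hG_def, Nat.unpair_pair, Encodable.encodek, Option.bind_some,
      Option.mem_def, Option.map_eq_some_iff]
    exact ⟨x, hk, trivial⟩

end Aux

theorem primrec_reduce {n : ℕ} (hn : 1 ≤ n) :
    Primrec (FreeGroup.reduce : List (Fin n × Bool) → List (Fin n × Bool)) := by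
  haveI : Inhabited (Fin n) := ⟨⟨0, hn⟩⟩
  set step : (Fin n × Bool) → List (Fin n × Bool) → List (Fin n × Bool) := fun x t =>
    if t = [] then [x]
    else if x.1 = t.headI.1 ∧ x.2 = !t.headI.2 then t.tail else x :: t with hstep_def
  have heq : ∀ L : List (Fin n × Bool), FreeGroup.reduce L = L.foldr step [] := by
    intro L
    induction L with
    | nil => rfl
    | cons x L ih =>
      rw [FreeGroup.reduce.cons, List.foldr_cons, ← ih]
      cases h : FreeGroup.reduce L with
      | nil => simp [hstep_def]
      | cons hd tl => simp [hstep_def]; split_ifs with hc; exacts [(if_pos hc).symm, (if_neg hc).symm]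
  have hcond1 : PrimrecPred fun q : List (Fin n × Bool) ×
      ((Fin n × Bool) × List (Fin n × Bool)) => q.2.2 = [] :=
    Primrec.eq.comp (Primrec.snd.comp Primrec.snd) (Primrec.const [])
  have hcond2 : PrimrecPred fun q : List (Fin n × Bool) ×
      ((Fin n × Bool) × List (Fin n × Bool)) =>
      q.2.1.1 = q.2.2.headI.1 ∧ q.2.1.2 = !q.2.2.headI.2 := by
    apply PrimrecPred.and
    · exact Primrec.eq.comp (Primrec.fst.comp (Primrec.fst.comp Primrec.snd))
        (Primrec.fst.comp (Primrec.list_headI.comp (Primrec.snd.comp Primrec.snd)))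
    · exact Primrec.eq.comp (Primrec.snd.comp (Primrec.fst.comp Primrec.snd))
        ((Primrec.dom_bool Bool.not).comp
          (Primrec.snd.comp (Primrec.list_headI.comp (Primrec.snd.comp Primrec.snd))))
  have hstep1 : Primrec fun q : List (Fin n × Bool) ×
      ((Fin n × Bool) × List (Fin n × Bool)) => step q.2.1 q.2.2 := by
    simp only [hstep_def]
    exact Primrec.ite hcond1
      (Primrec.list_cons.comp (Primrec.fst.comp Primrec.snd) (Primrec.const []))
      (Primrec.ite hcond2 (Primrec.list_tail.comp (Primrec.snd.comp Primrec.snd))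
        (Primrec.list_cons.comp (Primrec.fst.comp Primrec.snd)
          (Primrec.snd.comp Primrec.snd)))
  have hstep : Primrec₂ fun (_ : List (Fin n × Bool))
      (p : (Fin n × Bool) × List (Fin n × Bool)) => step p.1 p.2 := hstep1.to₂
  have := Primrec.list_foldr Primrec.id (Primrec.const ([] : List (Fin n × Bool))) hstep
  exact this.of_eq fun L => (heq L).symm

theorem primrec_invRev {n : ℕ} :
    Primrec (FreeGroup.invRev : List (Fin n × Bool) → List (Fin n × Bool)) := by
  have : Primrec fun L : List (Fin n × Bool) =>
      (L.map fun x => (x.1, !x.2)).reverse :=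
    Primrec.list_reverse.comp (Primrec.list_map Primrec.id
      ((Primrec.pair (Primrec.fst.comp Primrec.snd)
        ((Primrec.dom_bool Bool.not).comp (Primrec.snd.comp Primrec.snd)))))
  exact this.of_eq fun L => by simp [FreeGroup.invRev]

/-- If `T` contains exactly one representative of each right coset of `A` and
both membership in `A` and membership in `T` (as predicates on reduced words)
are recursively enumerable, then membership in `A` is decidable. -/
theorem decidable_of_re_transversal {n : ℕ} (hn : 1 ≤ n)
    (A : Subgroup (FreeGroup (Fin n))) (T : Set (FreeGroup (Fin n)))
    (hT : ∀ g : FreeGroup (Fin n), ∃! t, t ∈ T ∧ g * t⁻¹ ∈ A)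
    (h1 : (1 : FreeGroup (Fin n)) ∈ T)
    (hAre : REPred (fun L : List (Fin n × Bool) => FreeGroup.mk L ∈ A))
    (hTre : REPred (fun L : List (Fin n × Bool) => FreeGroup.mk L ∈ T)) :
    ComputablePred (fun L : List (Fin n × Bool) => FreeGroup.mk L ∈ A) := by
  rw [ComputablePred.computable_iff_re_compl_re']
  refine ⟨hAre, ?_⟩
  -- complement is r.e.
  have hmk1 : ∀ M : List (Fin n × Bool), FreeGroup.mk M = 1 ↔ FreeGroup.reduce M = [] := by
    intro M
    rw [← FreeGroup.toWord_eq_nil_iff, FreeGroup.toWord_mk]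
  -- r.e. of the witness relation on pairs
  have hne : REPred fun p : List (Fin n × Bool) × List (Fin n × Bool) =>
      ¬ FreeGroup.mk p.2 = 1 := by
    apply ComputablePred.to_re
    rw [ComputablePred.computable_iff]
    refine ⟨fun p => !decide (FreeGroup.reduce p.2 = []), ?_, ?_⟩
    · exact (Primrec.not.comp ((Primrec.eq.comp ((primrec_reduce hn).comp Primrec.snd)
        (Primrec.const [])).decide)).to_comp
    · funext p
      simp [hmk1]
  have hTre' : REPred fun p : List (Fin n × Bool) × List (Fin n × Bool) =>
      FreeGroup.mk p.2 ∈ T := hTre.comp' Computable.snd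
  have hAre' : REPred fun p : List (Fin n × Bool) × List (Fin n × Bool) =>
      FreeGroup.mk (p.1 ++ FreeGroup.invRev p.2) ∈ A := by
    refine hAre.comp' ?_
    exact (Primrec.list_append.comp Primrec.fst (primrec_invRev.comp Primrec.snd)).to_comp
  have hre : REPred fun L : List (Fin n × Bool) => ∃ M : List (Fin n × Bool),
      FreeGroup.mk M ∈ T ∧ ¬ FreeGroup.mk M = 1 ∧
        FreeGroup.mk (L ++ FreeGroup.invRev M) ∈ A :=
    REPred.exists' ((hTre'.and' (hne.and' hAre')))
  refine hre.of_eq fun L => ?_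
  have hmul : ∀ M : List (Fin n × Bool),
      FreeGroup.mk (L ++ FreeGroup.invRev M) = FreeGroup.mk L * (FreeGroup.mk M)⁻¹ := by
    intro M
    rw [FreeGroup.inv_mk, FreeGroup.mul_mk]
  constructor
  · rintro ⟨M, hMT, hMne, hMA⟩ hLA
    rw [hmul] at hMA
    obtain ⟨t, -, huniq⟩ := hT (FreeGroup.mk L)
    have h2 := huniq (FreeGroup.mk M) ⟨hMT, hMA⟩
    have h3 := huniq 1 ⟨h1, by simpa using hLA⟩
    exact hMne (h2.trans h3.symm)
  · intro hLA
    obtain ⟨t, ⟨htT, htA⟩, -⟩ := hT (FreeGroup.mk L)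
    refine ⟨t.toWord, ?_, ?_, ?_⟩
    · rw [FreeGroup.mk_toWord]; exact htT
    · rw [FreeGroup.mk_toWord]
      rintro rfl
      simp only [inv_one, mul_one] at htA
      exact hLA htA
    · rw [hmul, FreeGroup.mk_toWord]; exact htA
end
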